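/- Test-norm bound for the composition of two AOTI kernels (used for I₂ in the proof of Theorem 3.3). Let ε₁∈(0,1], ε₂>0 and A>0. For k,ℓ∈ℤ with k≥ℓ, let S:X×X→ℂ and T:X×X→ℂ be measurable kernels satisfying, at scales 2^{-k} and 2^{-ℓ} respectively: the size bound |S(x,y)| ≤ A[V_{2^{-k}}(x)+V(x,y)]⁻¹(2^{-k}/(2^{-k}+d(x,y)))^{ε₂} (and the same for T at scale 2^{-ℓ}); the ε₁-Hölder regularity in each variable at the respective scale (conditions (ii),(iii) of Definition 2.1); and the normalization ∫_X S(x,z)dμ(z)=1=∫_X S(z,y)dμ(z) and likewise for T. Let ε∈(0,min(ε₁,ε₂)) and define U(x,y)=∫_X S(x,z)T(z,y)dμ(z). Then there exists a constant C>0, depending only on A, ε, ε₁, ε₂ and the doubling constants (in particular independent of k, ℓ and x), such that for every x∈X, ‖U(x,·)‖_{G(x,2^{-ℓ},ε,ε)} ≤ C. -/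

import Mathlib

open MeasureTheory Metric Set Filter
open scoped ENNReal NNReal Topology

namespace RDHardy

variable {X : Type*} [MetricSpace X] [MeasurableSpace X] [BorelSpace X]

/-- The measure of the ball `B(x,r)` as a real number: `V_r(x)`. -/
noncomputable def vol (μ : Measure X) (x : X) (r : ℝ) : ℝ := (μ (ball x r)).toReal

/-- Every ball has finite and positive measure. -/
def BallsFinitePos (μ : Measure X) : Prop :=
  ∀ (x : X) (r : ℝ), 0 < r → 0 < μ (ball x r) ∧ μ (ball x r) < ∞

/-- The doubling property `μ(B(x, λ r)) ≤ C₁ λ^n μ(B(x,r))`. -/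
def Doubling (μ : Measure X) (C₁ n : ℝ) : Prop :=
  ∀ (x : X) (l r : ℝ), 1 ≤ l → 0 < r →
    μ (ball x (l * r)) ≤ ENNReal.ofReal (C₁ * l ^ n) * μ (ball x r)

/-- The reverse doubling property `μ(B(x, C₂ r)) ≥ C₃ μ(B(x,r))` for `0 < r < diam X`. -/
def ReverseDoubling (μ : Measure X) (C₂ C₃ : ℝ) : Prop :=
  ∀ (x : X) (r : ℝ), 0 < r → ENNReal.ofReal r < EMetric.diam (univ : Set X) →
    ENNReal.ofReal C₃ * μ (ball x r) ≤ μ (ball x (C₂ * r))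

/-- An RD-space with `μ(X) = ∞`: doubling, all balls of finite positive measure,
reverse doubling, infinite total measure. -/
structure IsRD (μ : Measure X) (C₁ n C₂ C₃ : ℝ) : Prop where
  one_le_C₁ : 1 ≤ C₁
  n_pos : 0 < n
  balls : BallsFinitePos μ
  doubling : Doubling μ C₁ n
  one_lt_C₂ : 1 < C₂
  one_lt_C₃ : 1 < C₃
  rev : ReverseDoubling μ C₂ C₃
  infinite : μ univ = ∞

/-- The scale `2^{-k}`. -/
noncomputable def sc (k : ℤ) : ℝ := (2 : ℝ) ^ (-k)

/-- The standard size majorant `[V_r(x)+V(x,y)]⁻¹ (r/(r+d(x,y)))^γ`. -/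
noncomputable def sz (μ : Measure X) (x y : X) (r γ : ℝ) : ℝ :=
  (vol μ x r + vol μ x (dist x y))⁻¹ * (r / (r + dist x y)) ^ γ

/-- An `(ε₁, ε₂, ε₃)`-approximation of the identity with constant `C₄`. -/
structure IsAOTI (μ : Measure X) (C₄ ε₁ ε₂ ε₃ : ℝ) (S : ℤ → X → X → ℂ) : Prop where
  meas : ∀ k, Measurable (Function.uncurry (S k))
  size : ∀ (k : ℤ) (x y : X), ‖S k x y‖ ≤ C₄ * sz μ x y (sc k) ε₂
  holder_fst : ∀ (k : ℤ) (x x' y : X), dist x x' ≤ (sc k + dist x y) / 2 →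
    ‖S k x y - S k x' y‖ ≤ C₄ * (dist x x' / (sc k + dist x y)) ^ ε₁ * sz μ x y (sc k) ε₂
  holder_snd : ∀ (k : ℤ) (x y y' : X), dist y y' ≤ (sc k + dist x y) / 2 →
    ‖S k x y - S k x y'‖ ≤ C₄ * (dist y y' / (sc k + dist x y)) ^ ε₁ * sz μ x y (sc k) ε₂
  second_diff : ∀ (k : ℤ) (x x' y y' : X), dist x x' ≤ (sc k + dist x y) / 3 →
    dist y y' ≤ (sc k + dist x y) / 3 →
    ‖S k x y - S k x y' - (S k x' y - S k x' y')‖ ≤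
      C₄ * (dist x x' / (sc k + dist x y)) ^ ε₁ * (dist y y' / (sc k + dist x y)) ^ ε₁ *
        sz μ x y (sc k) ε₃
  int_fst : ∀ (k : ℤ) (y : X), ∫ z, S k z y ∂μ = 1
  int_snd : ∀ (k : ℤ) (x : X), ∫ z, S k x z ∂μ = 1

/-- `S_k(f)(x) = ∫ S_k(x,y) f(y) dμ(y)`. -/
noncomputable def Sop (μ : Measure X) (S : ℤ → X → X → ℂ) (k : ℤ) (f : X → ℂ) (x : X) : ℂ :=
  ∫ y, S k x y * f y ∂μ

/-- The radial maximal function `S⁺(f)(x) = sup_{k∈ℤ} |S_k(f)(x)|`. -/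
noncomputable def radialMax (μ : Measure X) (S : ℤ → X → X → ℂ) (f : X → ℂ) (x : X) : ℝ≥0∞ :=
  ⨆ k : ℤ, ENNReal.ofReal ‖Sop μ S k f x‖

/-- The localized radial maximal function `S⁺_ℓ(f)(x) = sup_{k ≥ ℓ} |S_k(f)(x)|`. -/
noncomputable def radialMaxLoc (μ : Measure X) (S : ℤ → X → X → ℂ) (ℓ : ℤ) (f : X → ℂ)
    (x : X) : ℝ≥0∞ :=
  ⨆ (k : ℤ) (_ : ℓ ≤ k), ENNReal.ofReal ‖Sop μ S k f x‖

/-- `S_k^{(a)}(f)(x) = V_{a 2^{-k}}(x)⁻¹ ∫_{B(x, a 2^{-k})} |S_k(f)(y)| dμ(y)`. -/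
noncomputable def radialAvg (μ : Measure X) (S : ℤ → X → X → ℂ) (a : ℝ) (k : ℤ) (f : X → ℂ)
    (x : X) : ℝ≥0∞ :=
  (μ (ball x (a * sc k)))⁻¹ *
    ∫⁻ y in ball x (a * sc k), ENNReal.ofReal ‖Sop μ S k f y‖ ∂μ

/-- `TestBound μ x r β γ φ C` says that `‖φ‖_{G(x,r,β,γ)} ≤ C`, i.e. `C` is an admissible
constant in the size and regularity conditions defining the space of test functions. -/
def TestBound (μ : Measure X) (x : X) (r β γ : ℝ) (φ : X → ℂ) (C : ℝ) : Prop :=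
  (∀ y : X, ‖φ y‖ ≤ C * sz μ x y r γ) ∧
  ∀ y y' : X, dist y y' ≤ (r + dist x y) / 2 →
    ‖φ y - φ y'‖ ≤ C * (dist y y' / (r + dist x y)) ^ β * sz μ x y r γ

/-- The grand maximal function `G(f)(x)`. -/
noncomputable def grandMax (μ : Measure X) (ε β γ : ℝ) (f : X → ℂ) (x : X) : ℝ≥0∞ :=
  ⨆ (r : ℝ) (_ : 0 < r) (φ : X → ℂ)
    (_ : ∃ C : ℝ, 0 ≤ C ∧ TestBound μ x r ε ε φ C) (_ : TestBound μ x r β γ φ 1),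
    ENNReal.ofReal ‖∫ z, f z * φ z ∂μ‖

/-- The localized grand maximal function `G_ℓ(f)(x)` (radii restricted to `(0, 2^{-ℓ}]`). -/
noncomputable def grandMaxLoc (μ : Measure X) (ε β γ : ℝ) (ℓ : ℤ) (f : X → ℂ)
    (x : X) : ℝ≥0∞ :=
  ⨆ (r : ℝ) (_ : 0 < r ∧ r ≤ sc ℓ) (φ : X → ℂ)
    (_ : ∃ C : ℝ, 0 ≤ C ∧ TestBound μ x r ε ε φ C) (_ : TestBound μ x r β γ φ 1),
    ENNReal.ofReal ‖∫ z, f z * φ z ∂μ‖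

/-- `L^p` quasi-norm (with `0 < p ≤ 1`) of an `ℝ≥0∞`-valued function. -/
noncomputable def lpNorm (μ : Measure X) (p : ℝ) (g : X → ℝ≥0∞) : ℝ≥0∞ :=
  (∫⁻ x, g x ^ p ∂μ) ^ (1 / p)

/-- The Hardy–Littlewood maximal function of an `ℝ≥0∞`-valued function. -/
noncomputable def HL (μ : Measure X) (g : X → ℝ≥0∞) (x : X) : ℝ≥0∞ :=
  ⨆ (r : ℝ) (_ : 0 < r), (μ (ball x r))⁻¹ * ∫⁻ y in ball x r, g y ∂μ

section Aux
variable {μ : Measure X} {C₁ n : ℝ}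
set_option linter.unusedSectionVars false

lemma inv_flip {A B c : ℝ≥0∞} (hA0 : A ≠ 0) (hAt : A ≠ ∞) (hB0 : B ≠ 0) (hBt : B ≠ ∞)
    (h : A ≤ c * B) : B⁻¹ ≤ c * A⁻¹ := by
  calc B⁻¹ = (A * A⁻¹) * B⁻¹ := by rw [ENNReal.mul_inv_cancel hA0 hAt, one_mul]
    _ ≤ (c * B * A⁻¹) * B⁻¹ := by
        exact mul_le_mul' (mul_le_mul' h le_rfl) le_rfl
    _ = (c * A⁻¹) * (B * B⁻¹) := by ring
    _ = c * A⁻¹ := by rw [ENNReal.mul_inv_cancel hB0 hBt, mul_one]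

lemma W_ne_zero (hb : BallsFinitePos μ) {x : X} {r : ℝ} (hr : 0 < r) : μ (ball x r) ≠ 0 :=
  (hb x r hr).1.ne'

lemma W_ne_top (hb : BallsFinitePos μ) {x : X} {r : ℝ} (hr : 0 < r) : μ (ball x r) ≠ ∞ :=
  (hb x r hr).2.ne

lemma ofReal_CK_pos (hC₁ : 1 ≤ C₁) (hn : 0 ≤ n) {K : ℝ} (hK : 1 ≤ K) :
    1 ≤ ENNReal.ofReal (C₁ * K ^ n) := by
  rw [show (1:ℝ≥0∞) = ENNReal.ofReal 1 by simp]
  apply ENNReal.ofReal_le_ofReal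
  have hKn : (1:ℝ) ≤ K ^ n := Real.one_le_rpow hK hn
  nlinarith [hKn]

lemma W_comp (hd : Doubling μ C₁ n) {x z : X} {s s' K : ℝ} (hs' : 0 < s') (hK : 1 ≤ K)
    (h : s + dist x z ≤ K * s') : μ (ball x s) ≤ ENNReal.ofReal (C₁ * K ^ n) * μ (ball z s') := by
  calc μ (ball x s) ≤ μ (ball z (K * s')) := measure_mono (ball_subset_ball' h)
    _ ≤ ENNReal.ofReal (C₁ * K ^ n) * μ (ball z s') := hd z K s' hK hs'

lemma inv_W_comp (hb : BallsFinitePos μ) (hd : Doubling μ C₁ n) {x z : X} {s s' K : ℝ}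
    (hs : 0 < s) (hs' : 0 < s') (hK : 1 ≤ K) (h : s + dist x z ≤ K * s') :
    (μ (ball z s'))⁻¹ ≤ ENNReal.ofReal (C₁ * K ^ n) * (μ (ball x s))⁻¹ :=
  inv_flip (W_ne_zero hb hs) (W_ne_top hb hs) (W_ne_zero hb hs') (W_ne_top hb hs')
    (W_comp hd hs' hK h)

end Aux



noncomputable def prof (μ : Measure X) (p : X) (r γ : ℝ) (z : X) : ℝ≥0∞ :=
  (μ (ball p (r + dist p z)))⁻¹ * ENNReal.ofReal ((r / (r + dist p z)) ^ γ)

section Aux2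
variable {μ : Measure X} {C₁ n : ℝ}
set_option linter.unusedSectionVars false

lemma prof_meas (p : X) {r γ : ℝ} (hγ : 0 ≤ γ) : Measurable (prof μ p r γ) := by
  have hdist : Measurable fun z : X => dist p z :=
    (continuous_const.dist continuous_id).measurable
  have h1 : Measurable fun z : X => μ (ball p (r + dist p z)) := by
    have hm : Monotone fun s : ℝ => μ (ball p s) := fun a b hab => measure_mono (ball_subset_ball hab)
    exact hm.measurable.comp (measurable_const.add hdist)
  have h2 : Measurable fun z : X => ENNReal.ofReal ((r / (r + dist p z)) ^ γ) := by
    apply Measurable.ennreal_ofReal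
    exact (Real.continuous_rpow_const hγ).measurable.comp
      (measurable_const.div (measurable_const.add hdist))
  exact h1.inv.mul h2

lemma setLint_le_of_le {s : Set X} (hs : MeasurableSet s) {f : X → ℝ≥0∞} {c : ℝ≥0∞}
    (h : ∀ z ∈ s, f z ≤ c) : ∫⁻ z in s, f z ∂μ ≤ c * μ s := by
  calc ∫⁻ z in s, f z ∂μ ≤ ∫⁻ _ in s, c ∂μ := setLIntegral_mono' hs h
    _ = c * μ s := setLIntegral_const s c

set_option maxHeartbeats 1000000 in
lemma prof_lintegral (hb : BallsFinitePos μ) (hd : Doubling μ C₁ n) {γ : ℝ} (hγ : 0 < γ) :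
    ∃ κ : ℝ≥0∞, κ ≠ ∞ ∧ ∀ (p : X) (r : ℝ), 0 < r → ∫⁻ z, prof μ p r γ z ∂μ ≤ κ := by
  set c : ℝ≥0∞ := ENNReal.ofReal (C₁ * 2 ^ n) with hc
  set q : ℝ≥0∞ := ENNReal.ofReal ((1/2 : ℝ) ^ γ) with hqdef
  have hq1 : q < 1 := ENNReal.ofReal_lt_one.2 (Real.rpow_lt_one (by norm_num) (by norm_num) hγ)
  have hsub : (1 : ℝ≥0∞) - q ≠ 0 := (tsub_pos_iff_lt.2 hq1).ne'
  refine ⟨1 + c * (1 - q)⁻¹, ?_, ?_⟩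
  · exact ENNReal.add_ne_top.2 ⟨ENNReal.one_ne_top,
      ENNReal.mul_ne_top ENNReal.ofReal_ne_top (ENNReal.inv_ne_top.2 hsub)⟩
  intro p r hr
  set E : ℕ → Set X := fun j => match j with
    | 0 => ball p r
    | (j+1) => ball p (2^(j+1) * r) \ ball p (2^j * r) with hE
  have hEm : ∀ j, MeasurableSet (E j) := by
    intro j
    match j with
    | 0 => exact measurableSet_ball
    | (j+1) => exact measurableSet_ball.diff measurableSet_ball
  have hcover : (⋃ j, E j) = univ := by
    apply eq_univ_iff_forall.2
    intro z
    have hex : ∃ m : ℕ, dist p z < 2 ^ m * r := by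
      obtain ⟨m, hm⟩ := pow_unbounded_of_one_lt (dist p z / r) (one_lt_two (α := ℝ))
      exact ⟨m, by rw [div_lt_iff₀ hr] at hm; linarith [hm]⟩
    rw [mem_iUnion]
    cases h : Nat.find hex with
    | zero =>
      refine ⟨0, ?_⟩
      have hs := Nat.find_spec hex
      rw [h] at hs
      exact mem_ball'.2 (by simpa using hs)
    | succ m =>
      refine ⟨m + 1, ?_⟩
      have hs := Nat.find_spec hex
      rw [h] at hs
      have hmin : ¬ dist p z < 2 ^ m * r := Nat.find_min hex (by omega)
      exact ⟨mem_ball'.2 hs, fun hc => hmin (mem_ball'.1 hc)⟩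
  have key0 : ∫⁻ z in E 0, prof μ p r γ z ∂μ ≤ 1 := by
      have hb1 : ∀ z ∈ E 0, prof μ p r γ z ≤ (μ (ball p r))⁻¹ := by
        intro z _
        unfold prof
        calc (μ (ball p (r + dist p z)))⁻¹ * ENNReal.ofReal ((r / (r + dist p z)) ^ γ)
            ≤ (μ (ball p r))⁻¹ * 1 := by
              apply mul_le_mul'
              · exact ENNReal.inv_le_inv'
                  (measure_mono (ball_subset_ball (by linarith [dist_nonneg (x := p) (y := z)])))
              · apply ENNReal.ofReal_le_one.2
                apply Real.rpow_le_one (by positivity)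
                · apply div_le_one_of_le₀ (by linarith [dist_nonneg (x := p) (y := z)])
                  linarith [dist_nonneg (x := p) (y := z)]
                · exact hγ.le
          _ = (μ (ball p r))⁻¹ := mul_one _
      calc ∫⁻ z in E 0, prof μ p r γ z ∂μ ≤ (μ (ball p r))⁻¹ * μ (E 0) :=
            setLint_le_of_le (hEm 0) hb1
        _ = (μ (ball p r))⁻¹ * μ (ball p r) := rfl
        _ = 1 := ENNReal.inv_mul_cancel (W_ne_zero hb hr) (W_ne_top hb hr)
  have keyS : ∀ j : ℕ, ∫⁻ z in E (j+1), prof μ p r γ z ∂μ ≤ c * q ^ j := by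
      intro j
      have hrj : (0:ℝ) < 2 ^ j * r := by positivity
      have hb1 : ∀ z ∈ E (j+1), prof μ p r γ z ≤ (μ (ball p (2^j * r)))⁻¹ * q ^ j := by
        intro z hz
        have hzd : 2 ^ j * r ≤ dist p z := by
          have := hz.2
          rw [mem_ball'] at this
          push_neg at this
          exact this
        unfold prof
        apply mul_le_mul'
        · exact ENNReal.inv_le_inv'
            (measure_mono (ball_subset_ball (by linarith)))
        · have hratio : r / (r + dist p z) ≤ (1/2 : ℝ) ^ j := by
            have h1 : r / (r + dist p z) ≤ r / (2 ^ j * r) :=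
              div_le_div_of_nonneg_left hr.le hrj (by linarith)
            have h2 : r / (2 ^ j * r) = (1/2 : ℝ) ^ j := by
              field_simp
              rw [← mul_pow]; norm_num
            linarith [h1, h2.le, h2.ge]
          calc ENNReal.ofReal ((r / (r + dist p z)) ^ γ)
              ≤ ENNReal.ofReal (((1/2 : ℝ) ^ j) ^ γ) := by
                apply ENNReal.ofReal_le_ofReal
                exact Real.rpow_le_rpow (by positivity) hratio hγ.le
            _ = ENNReal.ofReal (((1/2 : ℝ) ^ γ) ^ j) := by
                congr 1
                rw [← Real.rpow_natCast ((1/2:ℝ)) j, ← Real.rpow_natCast ((1/2:ℝ)^γ) j,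
                  ← Real.rpow_mul (by norm_num), ← Real.rpow_mul (by norm_num), mul_comm]
            _ = q ^ j := ENNReal.ofReal_pow (by positivity) j
      calc ∫⁻ z in E (j+1), prof μ p r γ z ∂μ
          ≤ ((μ (ball p (2^j * r)))⁻¹ * q ^ j) * μ (E (j+1)) := setLint_le_of_le (hEm (j+1)) hb1
        _ ≤ ((μ (ball p (2^j * r)))⁻¹ * q ^ j) * (c * μ (ball p (2^j * r))) := by
            apply mul_le_mul' le_rfl
            calc μ (E (j+1)) ≤ μ (ball p (2^(j+1) * r)) := measure_mono Set.diff_subset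
              _ = μ (ball p (2 * (2^j * r))) := by rw [← mul_assoc, ← pow_succ']
              _ ≤ c * μ (ball p (2^j * r)) := hd p 2 (2^j * r) one_le_two hrj
        _ = (c * q ^ j) * ((μ (ball p (2^j * r)))⁻¹ * μ (ball p (2^j * r))) := by ring
        _ = c * q ^ j := by
            rw [ENNReal.inv_mul_cancel (W_ne_zero hb hrj) (W_ne_top hb hrj), mul_one]
  have step1 : ∫⁻ z, prof μ p r γ z ∂μ = ∫⁻ z in ⋃ j, E j, prof μ p r γ z ∂μ := by
    rw [hcover, setLIntegral_univ]
  have step2 : ∫⁻ z in ⋃ j, E j, prof μ p r γ z ∂μ ≤ ∑' j, ∫⁻ z in E j, prof μ p r γ z ∂μ :=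
    lintegral_iUnion_le E _
  have step3 : ∑' j, ∫⁻ z in E j, prof μ p r γ z ∂μ
      = (∫⁻ z in E 0, prof μ p r γ z ∂μ) + ∑' j, ∫⁻ z in E (j+1), prof μ p r γ z ∂μ :=
    tsum_eq_zero_add' ENNReal.summable
  have step4 : (∑' j : ℕ, c * q ^ j) = c * (1 - q)⁻¹ := by
    rw [ENNReal.tsum_mul_left, ENNReal.tsum_geometric]
  rw [step1, ← step4]
  refine le_trans step2 ?_
  rw [step3]
  exact add_le_add key0 (ENNReal.tsum_le_tsum keyS)
/-
  calc ∫⁻ z, prof μ p r γ z ∂μ = ∫⁻ z in ⋃ j, E j, prof μ p r γ z ∂μ := by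
        rw [hcover, setLIntegral_univ]
    _ ≤ ∑' j, ∫⁻ z in E j, prof μ p r γ z ∂μ := lintegral_iUnion_le E _
    _ = (∫⁻ z in E 0, prof μ p r γ z ∂μ) + ∑' j, ∫⁻ z in E (j+1), prof μ p r γ z ∂μ :=
        tsum_eq_zero_add' ENNReal.summable
    _ ≤ 1 + ∑' j, c * q ^ j := add_le_add key0 (ENNReal.tsum_le_tsum keyS)
    _ = 1 + c * (1 - q)⁻¹ := by rw [ENNReal.tsum_mul_left, ENNReal.tsum_geometric]
-/

end Aux2

section Aux3
variable {μ : Measure X} {C₁ n : ℝ}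
set_option linter.unusedSectionVars false

lemma ofReal_sz_le_prof (hb : BallsFinitePos μ) (hd : Doubling μ C₁ n) (hC₁ : 1 ≤ C₁)
    (hn : 0 < n) {x z : X} {r γ : ℝ} (hr : 0 < r) (hγ : 0 ≤ γ) :
    ENNReal.ofReal (sz μ x z r γ) ≤ ENNReal.ofReal (C₁ * 2 ^ n) * prof μ x r γ z := by
  set d := dist x z with hdd
  have hd0 : 0 ≤ d := dist_nonneg
  set m := max r d with hmm
  have hm : 0 < m := lt_of_lt_of_le hr (le_max_left _ _)
  have h1 : μ (ball x (r + d)) ≤ ENNReal.ofReal (C₁ * 2 ^ n) * μ (ball x m) := by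
    apply W_comp hd hm one_le_two
    simp only [dist_self, add_zero]
    rcases max_cases r d with ⟨h, h2⟩ | ⟨h, h2⟩ <;> rw [hmm, h] <;> linarith
  have h2 : μ (ball x m) ≤ μ (ball x r) + μ (ball x d) := by
    rcases max_cases r d with ⟨h, _⟩ | ⟨h, _⟩ <;> rw [hmm, h]
    · exact le_add_right le_rfl
    · exact le_add_left le_rfl
  have h3 : μ (ball x (r + d)) ≤ ENNReal.ofReal (C₁ * 2 ^ n) * (μ (ball x r) + μ (ball x d)) :=
    le_trans h1 (mul_le_mul' le_rfl h2)
  set T := μ (ball x r) + μ (ball x d) with hT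
  have hT0 : T ≠ 0 := by
    intro h
    exact W_ne_zero hb hr (by simpa using (add_eq_zero.1 h).1)
  have hTt : T ≠ ∞ := by
    apply ENNReal.add_ne_top.2
    constructor
    · exact W_ne_top hb hr
    · by_cases h : 0 < d
      · exact W_ne_top hb h
      · have : d = 0 := le_antisymm (not_lt.1 h) hd0
        rw [this]
        simp
  have hWrd0 : μ (ball x (r + d)) ≠ 0 := W_ne_zero hb (by linarith)
  have hWrdt : μ (ball x (r + d)) ≠ ∞ := W_ne_top hb (by linarith)
  have hinv : T⁻¹ ≤ ENNReal.ofReal (C₁ * 2 ^ n) * (μ (ball x (r + d)))⁻¹ :=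
    inv_flip hWrd0 hWrdt hT0 hTt h3
  have hvol : vol μ x r + vol μ x d = T.toReal := by
    rw [hT, ENNReal.toReal_add (W_ne_top hb hr) (by
      by_cases h : 0 < d
      · exact W_ne_top hb h
      · have : d = 0 := le_antisymm (not_lt.1 h) hd0
        rw [this]; simp)]
    rfl
  have hsz : sz μ x z r γ = T.toReal⁻¹ * (r / (r + d)) ^ γ := by
    rw [sz, ← hdd, hvol]
  rw [hsz, ENNReal.ofReal_mul (by positivity)]
  have hofr : ENNReal.ofReal T.toReal⁻¹ = T⁻¹ := by
    rw [← ENNReal.toReal_inv, ENNReal.ofReal_toReal (by simp [hT0])]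
  rw [hofr]
  calc T⁻¹ * ENNReal.ofReal ((r / (r + d)) ^ γ)
      ≤ (ENNReal.ofReal (C₁ * 2 ^ n) * (μ (ball x (r + d)))⁻¹) * ENNReal.ofReal ((r / (r + d)) ^ γ) :=
        mul_le_mul' hinv le_rfl
    _ = ENNReal.ofReal (C₁ * 2 ^ n) * prof μ x r γ z := by rw [prof, ← hdd, mul_assoc]

lemma prof_center_swap (hb : BallsFinitePos μ) (hd : Doubling μ C₁ n) (hC₁ : 1 ≤ C₁)
    (hn : 0 < n) {p z : X} {r γ : ℝ} (hr : 0 < r) :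
    prof μ z r γ p ≤ ENNReal.ofReal (C₁ * 2 ^ n) * prof μ p r γ z := by
  rw [prof, prof]
  have hdc : dist z p = dist p z := dist_comm z p
  rw [hdc]
  have hinv : (μ (ball z (r + dist p z)))⁻¹ ≤
      ENNReal.ofReal (C₁ * 2 ^ n) * (μ (ball p (r + dist p z)))⁻¹ := by
    apply inv_W_comp hb hd (by positivity) (by positivity) one_le_two
    have : dist p z ≥ 0 := dist_nonneg
    linarith [dist_comm p z ▸ le_refl (dist p z)]
  calc (μ (ball z (r + dist p z)))⁻¹ * ENNReal.ofReal ((r / (r + dist p z)) ^ γ)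
      ≤ (ENNReal.ofReal (C₁ * 2 ^ n) * (μ (ball p (r + dist p z)))⁻¹) *
        ENNReal.ofReal ((r / (r + dist p z)) ^ γ) := mul_le_mul' hinv le_rfl
    _ = _ := by rw [mul_assoc]

lemma ofReal_sz_moving_le_prof (hb : BallsFinitePos μ) (hd : Doubling μ C₁ n) (hC₁ : 1 ≤ C₁)
    (hn : 0 < n) {p z : X} {r γ : ℝ} (hr : 0 < r) (hγ : 0 ≤ γ) :
    ENNReal.ofReal (sz μ z p r γ) ≤
      ENNReal.ofReal (C₁ * 2 ^ n) * ENNReal.ofReal (C₁ * 2 ^ n) * prof μ p r γ z := by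
  calc ENNReal.ofReal (sz μ z p r γ) ≤ ENNReal.ofReal (C₁ * 2 ^ n) * prof μ z r γ p :=
        ofReal_sz_le_prof hb hd hC₁ hn hr hγ
    _ ≤ ENNReal.ofReal (C₁ * 2 ^ n) * (ENNReal.ofReal (C₁ * 2 ^ n) * prof μ p r γ z) :=
        mul_le_mul' le_rfl (prof_center_swap hb hd hC₁ hn hr)
    _ = _ := by rw [mul_assoc]

lemma sz_ge (hb : BallsFinitePos μ) {x y : X} {r γ : ℝ} (hr : 0 < r) (hγ : 0 ≤ γ) :
    (2 * (μ (ball x (r + dist x y))).toReal)⁻¹ * (r / (r + dist x y)) ^ γ ≤ sz μ x y r γ := by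
  set d := dist x y with hdd
  have hd0 : 0 ≤ d := dist_nonneg
  have hWt : μ (ball x (r + d)) ≠ ∞ := W_ne_top hb (by linarith)
  have h1 : vol μ x r ≤ (μ (ball x (r + d))).toReal :=
    ENNReal.toReal_mono hWt (measure_mono (ball_subset_ball (by linarith)))
  have h2 : vol μ x d ≤ (μ (ball x (r + d))).toReal :=
    ENNReal.toReal_mono hWt (measure_mono (ball_subset_ball (by linarith)))
  have hpos : 0 < vol μ x r := ENNReal.toReal_pos (W_ne_zero hb hr) (W_ne_top hb hr)
  have hvol0 : 0 < vol μ x r + vol μ x d := by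
    have : 0 ≤ vol μ x d := ENNReal.toReal_nonneg
    linarith
  rw [sz, ← hdd]
  apply mul_le_mul_of_nonneg_right _ (Real.rpow_nonneg (by positivity) _)
  apply inv_anti₀ hvol0
  linarith


lemma sz_nonneg {x y : X} {r γ : ℝ} (hr : 0 ≤ r) : 0 ≤ sz μ x y r γ := by
  apply mul_nonneg
  · apply inv_nonneg.2
    exact add_nonneg ENNReal.toReal_nonneg ENNReal.toReal_nonneg
  · exact Real.rpow_nonneg (by positivity) _

end Aux3

section Aux4
variable {μ : Measure X} {C₁ n : ℝ}
set_option linter.unusedSectionVars false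

lemma pow24 (hC₁ : 1 ≤ C₁) (hn : 0 < n) : ENNReal.ofReal (C₁ * 2 ^ n) ≤ ENNReal.ofReal (C₁ * 4 ^ n) := by
  apply ENNReal.ofReal_le_ofReal
  have : (2:ℝ) ^ n ≤ 4 ^ n := Real.rpow_le_rpow (by norm_num) (by norm_num) hn.le
  nlinarith

lemma conv_bound (hb : BallsFinitePos μ) (hd : Doubling μ C₁ n) (hC₁ : 1 ≤ C₁) (hn : 0 < n)
    {ε ε₂ : ℝ} (hε : 0 < ε) (hee : ε ≤ ε₂) :
    ∃ κ : ℝ≥0∞, κ ≠ ∞ ∧ ∀ (a b : ℝ) (x p : X), 0 < a → a ≤ b →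
      ∫⁻ z, prof μ x a ε₂ z * prof μ p b ε₂ z ∂μ ≤
        κ * ENNReal.ofReal ((b / (b + dist x p)) ^ ε) * (μ (ball x (b + dist x p)))⁻¹ := by
  have hε₂ : 0 < ε₂ := lt_of_lt_of_le hε hee
  obtain ⟨κ₀, hκ₀t, hκ₀⟩ := prof_lintegral hb hd hε₂
  set c2 : ℝ≥0∞ := ENNReal.ofReal (C₁ * 4 ^ n) * ENNReal.ofReal (2 ^ ε) with hc2
  have hc2t : c2 ≠ ∞ := ENNReal.mul_ne_top ENNReal.ofReal_ne_top ENNReal.ofReal_ne_top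
  refine ⟨c2 * (κ₀ + κ₀), ENNReal.mul_ne_top hc2t (ENNReal.add_ne_top.2 ⟨hκ₀t, hκ₀t⟩), ?_⟩
  intro a b x p ha hab
  have hb0 : 0 < b := lt_of_lt_of_le ha hab
  set R := b + dist x p with hR
  have hR0 : 0 < R := by rw [hR]; linarith [dist_nonneg (x := x) (y := p)]
  set B : ℝ≥0∞ := ENNReal.ofReal (C₁ * 4 ^ n) * ENNReal.ofReal (2 ^ ε) *
    ENNReal.ofReal ((b / R) ^ ε) * (μ (ball x R))⁻¹ with hBdef
  have hpt : ∀ z, prof μ x a ε₂ z * prof μ p b ε₂ z ≤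
      B * (prof μ x a ε₂ z + prof μ p b ε₂ z) := by
    intro z
    set u := a + dist x z with hu
    set t := b + dist p z with ht
    have hu0 : 0 < u := by rw [hu]; linarith [dist_nonneg (x := x) (y := z)]
    have ht0 : 0 < t := by rw [ht]; linarith [dist_nonneg (x := p) (y := z)]
    have htri : R ≤ u + t := by
      have h1 : dist x p ≤ dist x z + dist z p := dist_triangle x z p
      have h2 : dist z p = dist p z := dist_comm z p
      rw [hR, hu, ht]
      linarith
    have hcase : R ≤ 2 * u ∨ R ≤ 2 * t := by
      rcases le_total u t with h | h
      · right; linarith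
      · left; linarith
    rcases hcase with hcu | hct
    · -- bound the x-factor
      have hx : prof μ x a ε₂ z ≤ B := by
        rw [prof, ← hu, hBdef]
        have hinv : (μ (ball x u))⁻¹ ≤ ENNReal.ofReal (C₁ * 4 ^ n) * (μ (ball x R))⁻¹ := by
          refine le_trans (inv_W_comp hb hd (x := x) (z := x) (s := R) (s' := u) (K := 2)
            hR0 hu0 (by norm_num) ?_) (mul_le_mul' (pow24 hC₁ hn) le_rfl)
          simp only [dist_self, add_zero]; linarith
        have hrat : ENNReal.ofReal ((a / u) ^ ε₂) ≤
            ENNReal.ofReal (2 ^ ε) * ENNReal.ofReal ((b / R) ^ ε) := by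
          rw [← ENNReal.ofReal_mul (by positivity)]
          apply ENNReal.ofReal_le_ofReal
          have s1 : (a / u) ^ ε₂ ≤ (a / u) ^ ε := by
            apply Real.rpow_le_rpow_of_exponent_ge (by positivity) _ hee
            apply div_le_one_of_le₀ _ hu0.le
            rw [hu]; linarith [dist_nonneg (x := x) (y := z)]
          have s2 : (a / u) ^ ε ≤ (2 * (b / R)) ^ ε := by
            apply Real.rpow_le_rpow (by positivity) _ hε.le
            rw [div_le_iff₀ hu0, show 2 * (b / R) * u = 2 * b * u / R by ring,
              le_div_iff₀ hR0]
            nlinarith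
          have s3 : (2 * (b / R)) ^ ε = 2 ^ ε * (b / R) ^ ε :=
            Real.mul_rpow (by norm_num) (by positivity)
          nlinarith [s1, s2, s3.le, s3.ge]
        calc (μ (ball x u))⁻¹ * ENNReal.ofReal ((a / u) ^ ε₂)
            ≤ (ENNReal.ofReal (C₁ * 4 ^ n) * (μ (ball x R))⁻¹) *
              (ENNReal.ofReal (2 ^ ε) * ENNReal.ofReal ((b / R) ^ ε)) := mul_le_mul' hinv hrat
          _ = ENNReal.ofReal (C₁ * 4 ^ n) * ENNReal.ofReal (2 ^ ε) *
              ENNReal.ofReal ((b / R) ^ ε) * (μ (ball x R))⁻¹ := by ring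
      calc prof μ x a ε₂ z * prof μ p b ε₂ z ≤ B * prof μ p b ε₂ z := mul_le_mul' hx le_rfl
        _ ≤ B * (prof μ x a ε₂ z + prof μ p b ε₂ z) := mul_le_mul' le_rfl le_add_self
    · -- bound the p-factor
      have hp : prof μ p b ε₂ z ≤ B := by
        rw [prof, ← ht, hBdef]
        have hinv : (μ (ball p t))⁻¹ ≤ ENNReal.ofReal (C₁ * 4 ^ n) * (μ (ball x R))⁻¹ := by
          apply inv_W_comp hb hd hR0 ht0 (by norm_num : (1:ℝ) ≤ 4)
          have : dist x p ≤ R := by rw [hR]; linarith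
          linarith
        have hrat : ENNReal.ofReal ((b / t) ^ ε₂) ≤
            ENNReal.ofReal (2 ^ ε) * ENNReal.ofReal ((b / R) ^ ε) := by
          rw [← ENNReal.ofReal_mul (by positivity)]
          apply ENNReal.ofReal_le_ofReal
          have s1 : (b / t) ^ ε₂ ≤ (b / t) ^ ε := by
            apply Real.rpow_le_rpow_of_exponent_ge (by positivity) _ hee
            apply div_le_one_of_le₀ _ ht0.le
            rw [ht]; linarith [dist_nonneg (x := p) (y := z)]
          have s2 : (b / t) ^ ε ≤ (2 * (b / R)) ^ ε := by
            apply Real.rpow_le_rpow (by positivity) _ hε.le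
            rw [div_le_iff₀ ht0, show 2 * (b / R) * t = 2 * b * t / R by ring,
              le_div_iff₀ hR0]
            nlinarith
          have s3 : (2 * (b / R)) ^ ε = 2 ^ ε * (b / R) ^ ε :=
            Real.mul_rpow (by norm_num) (by positivity)
          nlinarith [s1, s2, s3.le, s3.ge]
        calc (μ (ball p t))⁻¹ * ENNReal.ofReal ((b / t) ^ ε₂)
            ≤ (ENNReal.ofReal (C₁ * 4 ^ n) * (μ (ball x R))⁻¹) *
              (ENNReal.ofReal (2 ^ ε) * ENNReal.ofReal ((b / R) ^ ε)) := mul_le_mul' hinv hrat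
          _ = ENNReal.ofReal (C₁ * 4 ^ n) * ENNReal.ofReal (2 ^ ε) *
              ENNReal.ofReal ((b / R) ^ ε) * (μ (ball x R))⁻¹ := by ring
      calc prof μ x a ε₂ z * prof μ p b ε₂ z ≤ prof μ x a ε₂ z * B := mul_le_mul' le_rfl hp
        _ = B * prof μ x a ε₂ z := mul_comm _ _
        _ ≤ B * (prof μ x a ε₂ z + prof μ p b ε₂ z) := mul_le_mul' le_rfl le_self_add
  have hBt : B ≠ ∞ := by
    rw [hBdef]
    exact ENNReal.mul_ne_top (ENNReal.mul_ne_top (ENNReal.mul_ne_top ENNReal.ofReal_ne_top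
      ENNReal.ofReal_ne_top) ENNReal.ofReal_ne_top) (ENNReal.inv_ne_top.2 (W_ne_zero hb hR0))
  calc ∫⁻ z, prof μ x a ε₂ z * prof μ p b ε₂ z ∂μ
      ≤ ∫⁻ z, B * (prof μ x a ε₂ z + prof μ p b ε₂ z) ∂μ := lintegral_mono hpt
    _ = B * ∫⁻ z, prof μ x a ε₂ z + prof μ p b ε₂ z ∂μ := lintegral_const_mul' _ _ hBt
    _ = B * ((∫⁻ z, prof μ x a ε₂ z ∂μ) + ∫⁻ z, prof μ p b ε₂ z ∂μ) := by
        rw [lintegral_add_left (prof_meas x hε₂.le)]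
    _ ≤ B * (κ₀ + κ₀) := mul_le_mul' le_rfl (add_le_add (hκ₀ x a ha) (hκ₀ p b hb0))
    _ = c2 * (κ₀ + κ₀) * ENNReal.ofReal ((b / R) ^ ε) * (μ (ball x R))⁻¹ := by
        rw [hBdef, hc2]; ring

end Aux4

section Aux5
variable {μ : Measure X} {C₁ n : ℝ}
set_option linter.unusedSectionVars false

lemma G_bound (hb : BallsFinitePos μ) (hd : Doubling μ C₁ n) (hC₁ : 1 ≤ C₁) (hn : 0 < n)
    {A ε ε₁ ε₂ b h R : ℝ} (hA : 0 < A) (hε0 : 0 < ε) (he1 : ε ≤ ε₁) (he2 : ε ≤ ε₂)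
    (hb0 : 0 < b) (hh : 0 < h) (hhR : h ≤ R / 2) {y y' : X} (hyy' : dist y y' = h)
    (T : X → X → ℂ)
    (hTsize : ∀ p w, ‖T p w‖ ≤ A * sz μ p w b ε₂)
    (hTsnd : ∀ p w w', dist w w' ≤ (b + dist p w) / 2 →
      ‖T p w - T p w'‖ ≤ A * (dist w w' / (b + dist p w)) ^ ε₁ * sz μ p w b ε₂) :
    ∀ z, ENNReal.ofReal ‖T z y - T z y'‖ ≤
      (ENNReal.ofReal A * ENNReal.ofReal (C₁ * 2 ^ n) * ENNReal.ofReal (C₁ * 2 ^ n) *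
        ENNReal.ofReal (2 ^ ε)) * ENNReal.ofReal ((h / R) ^ ε) *
        (ENNReal.ofReal ((R / (b + dist z y)) ^ ε) * (prof μ y b ε₂ z + prof μ y' b ε₂ z)) := by
  intro z
  have hR0 : 0 < R := by linarith
  set t := b + dist z y with htdef
  have ht0 : 0 < t := by rw [htdef]; linarith [dist_nonneg (x := z) (y := y)]
  have hsplit : (h / t) ^ ε = (h / R) ^ ε * (R / t) ^ ε := by
    rw [← Real.mul_rpow (by positivity) (by positivity)]
    congr 1
    field_simp
  set cV : ℝ≥0∞ := ENNReal.ofReal (C₁ * 2 ^ n) with hcV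
  have hone : (1 : ℝ≥0∞) ≤ ENNReal.ofReal (2 ^ ε) := by
    rw [show (1:ℝ≥0∞) = ENNReal.ofReal 1 by simp]
    exact ENNReal.ofReal_le_ofReal (Real.one_le_rpow one_le_two hε0.le)
  have hprofy : ENNReal.ofReal (sz μ z y b ε₂) ≤ cV * cV * prof μ y b ε₂ z :=
    ofReal_sz_moving_le_prof hb hd hC₁ hn hb0 (by linarith)
  have hprofy' : ENNReal.ofReal (sz μ z y' b ε₂) ≤ cV * cV * prof μ y' b ε₂ z :=
    ofReal_sz_moving_le_prof hb hd hC₁ hn hb0 (by linarith)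
  rcases le_or_gt h (t / 2) with hcase | hcase
  · -- Hölder case
    have hT1 : ‖T z y - T z y'‖ ≤ A * (h / t) ^ ε₁ * sz μ z y b ε₂ := by
      have := hTsnd z y y' (by rw [hyy', ← htdef]; linarith)
      rwa [hyy', ← htdef] at this
    have hT2 : A * (h / t) ^ ε₁ * sz μ z y b ε₂ ≤ A * (h / t) ^ ε * sz μ z y b ε₂ := by
      apply mul_le_mul_of_nonneg_right _ (sz_nonneg hb0.le)
      apply mul_le_mul_of_nonneg_left _ hA.le
      exact Real.rpow_le_rpow_of_exponent_ge (by positivity) (by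
        rw [div_le_one ht0]; linarith) he1
    calc ENNReal.ofReal ‖T z y - T z y'‖
        ≤ ENNReal.ofReal (A * (h / t) ^ ε * sz μ z y b ε₂) :=
          ENNReal.ofReal_le_ofReal (le_trans hT1 hT2)
      _ = ENNReal.ofReal (A * (h / t) ^ ε) * ENNReal.ofReal (sz μ z y b ε₂) :=
          ENNReal.ofReal_mul (by positivity)
      _ ≤ ENNReal.ofReal (A * (h / t) ^ ε) * (cV * cV * prof μ y b ε₂ z) :=
          mul_le_mul' le_rfl hprofy
      _ ≤ ENNReal.ofReal (A * (h / t) ^ ε) * (cV * cV * (prof μ y b ε₂ z + prof μ y' b ε₂ z)) := by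
          apply mul_le_mul' le_rfl
          exact mul_le_mul' le_rfl le_self_add
      _ = (ENNReal.ofReal A * cV * cV) * (ENNReal.ofReal ((h/R)^ε) *
            (ENNReal.ofReal ((R/t)^ε) * (prof μ y b ε₂ z + prof μ y' b ε₂ z))) := by
          rw [hsplit, ENNReal.ofReal_mul hA.le,
            ENNReal.ofReal_mul (by positivity : (0:ℝ) ≤ (h/R)^ε)]
          ring
      _ ≤ _ := by
          rw [show ENNReal.ofReal A * cV * cV * ENNReal.ofReal (2 ^ ε) *
              ENNReal.ofReal ((h / R) ^ ε) *
              (ENNReal.ofReal ((R / t) ^ ε) * (prof μ y b ε₂ z + prof μ y' b ε₂ z)) =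
              (ENNReal.ofReal A * cV * cV) * (ENNReal.ofReal ((h/R)^ε) *
              (ENNReal.ofReal ((R/t)^ε) * (prof μ y b ε₂ z + prof μ y' b ε₂ z))) *
              ENNReal.ofReal (2 ^ ε) by ring]
          exact le_mul_of_one_le_right' hone
  · -- size case
    have hfac : (1 : ℝ) ≤ 2 ^ ε * ((h / R) ^ ε * (R / t) ^ ε) := by
      have h2t : 1 ≤ 2 * h / t := by rw [le_div_iff₀ ht0]; linarith
      have : (1:ℝ) ≤ (2 * h / t) ^ ε := Real.one_le_rpow h2t hε0.le
      calc (1:ℝ) ≤ (2 * h / t) ^ ε := this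
        _ = 2 ^ ε * (h / t) ^ ε := by
            rw [mul_div_assoc, Real.mul_rpow (by norm_num) (by positivity)]
        _ = 2 ^ ε * ((h / R) ^ ε * (R / t) ^ ε) := by rw [hsplit]
    have hT1 : ‖T z y - T z y'‖ ≤ A * sz μ z y b ε₂ + A * sz μ z y' b ε₂ :=
      le_trans (norm_sub_le _ _) (add_le_add (hTsize z y) (hTsize z y'))
    calc ENNReal.ofReal ‖T z y - T z y'‖
        ≤ ENNReal.ofReal (A * sz μ z y b ε₂ + A * sz μ z y' b ε₂) :=
          ENNReal.ofReal_le_ofReal hT1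
      _ ≤ ENNReal.ofReal (A * sz μ z y b ε₂) + ENNReal.ofReal (A * sz μ z y' b ε₂) :=
          ENNReal.ofReal_add_le
      _ = ENNReal.ofReal A * ENNReal.ofReal (sz μ z y b ε₂) +
          ENNReal.ofReal A * ENNReal.ofReal (sz μ z y' b ε₂) := by
          rw [ENNReal.ofReal_mul hA.le, ENNReal.ofReal_mul hA.le]
      _ ≤ ENNReal.ofReal A * (cV * cV * prof μ y b ε₂ z) +
          ENNReal.ofReal A * (cV * cV * prof μ y' b ε₂ z) :=
          add_le_add (mul_le_mul' le_rfl hprofy) (mul_le_mul' le_rfl hprofy')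
      _ = (ENNReal.ofReal A * cV * cV) * (1 * (prof μ y b ε₂ z + prof μ y' b ε₂ z)) := by
          ring
      _ ≤ (ENNReal.ofReal A * cV * cV) * ((ENNReal.ofReal (2 ^ ε) *
            (ENNReal.ofReal ((h/R)^ε) * ENNReal.ofReal ((R/t)^ε))) *
            (prof μ y b ε₂ z + prof μ y' b ε₂ z)) := by
          apply mul_le_mul' le_rfl
          apply mul_le_mul' _ le_rfl
          calc (1:ℝ≥0∞) = ENNReal.ofReal 1 := by simp
            _ ≤ ENNReal.ofReal (2 ^ ε * ((h / R) ^ ε * (R / t) ^ ε)) :=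
                ENNReal.ofReal_le_ofReal hfac
            _ = _ := by
                rw [ENNReal.ofReal_mul (by positivity), ENNReal.ofReal_mul
                  (by positivity : (0:ℝ) ≤ (h/R)^ε)]
      _ = _ := by ring

end Aux5

section Aux6
variable {μ : Measure X} {C₁ n : ℝ}
set_option linter.unusedSectionVars false

lemma prof_le_inv {p z : X} {b γ : ℝ} (hb0 : 0 < b) (hγ : 0 ≤ γ) :
    prof μ p b γ z ≤ (μ (ball p b))⁻¹ := by
  rw [prof]
  calc (μ (ball p (b + dist p z)))⁻¹ * ENNReal.ofReal ((b / (b + dist p z)) ^ γ)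
      ≤ (μ (ball p b))⁻¹ * 1 := by
        apply mul_le_mul'
        · exact ENNReal.inv_le_inv' (measure_mono (ball_subset_ball
            (by linarith [dist_nonneg (x := p) (y := z)])))
        · apply ENNReal.ofReal_le_one.2
          apply Real.rpow_le_one (by positivity) _ hγ
          apply div_le_one_of_le₀ (by linarith [dist_nonneg (x := p) (y := z)])
          linarith [dist_nonneg (x := p) (y := z)]
    _ = (μ (ball p b))⁻¹ := mul_one _

lemma one_le_cV (hC₁ : 1 ≤ C₁) (hn : 0 < n) : (1:ℝ≥0∞) ≤ ENNReal.ofReal (C₁ * 2 ^ n) :=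
  ofReal_CK_pos hC₁ hn.le one_le_two

lemma termII_bound (hb : BallsFinitePos μ) (hd : Doubling μ C₁ n) (hC₁ : 1 ≤ C₁) (hn : 0 < n)
    {A ε ε₁ ε₂ : ℝ} (hA : 0 < A) (hε0 : 0 < ε) (he1 : ε ≤ ε₁) (he2 : ε < ε₂) :
    ∃ κ : ℝ≥0∞, κ ≠ ∞ ∧ ∀ (a b : ℝ) (x y y' : X) (S T : X → X → ℂ), 0 < a → a ≤ b →
      0 < dist y y' → dist y y' ≤ (b + dist x y) / 2 →
      (∀ x' y'', ‖S x' y''‖ ≤ A * sz μ x' y'' a ε₂) →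
      (∀ p w, ‖T p w‖ ≤ A * sz μ p w b ε₂) →
      (∀ p w w', dist w w' ≤ (b + dist p w) / 2 →
        ‖T p w - T p w'‖ ≤ A * (dist w w' / (b + dist p w)) ^ ε₁ * sz μ p w b ε₂) →
      ∫⁻ z in {z | dist z y ≤ (a + dist x y) / 2}ᶜ,
          ENNReal.ofReal ‖S x z * (T z y - T z y')‖ ∂μ ≤
        κ * ENNReal.ofReal ((dist y y' / (b + dist x y)) ^ ε) *
          ENNReal.ofReal ((b / (b + dist x y)) ^ ε) * (μ (ball x (b + dist x y)))⁻¹ := by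
  obtain ⟨κc, hκct, hκc⟩ := conv_bound hb hd hC₁ hn hε0 he2.le
  set cV : ℝ≥0∞ := ENNReal.ofReal (C₁ * 2 ^ n) with hcV
  set cE : ℝ≥0∞ := ENNReal.ofReal (2 ^ ε) with hcE
  set cG : ℝ≥0∞ := ENNReal.ofReal A * cV * cV * cE with hcG
  set CC : ℝ≥0∞ := ENNReal.ofReal A * cV * cG * cE with hCC
  have hcVt : cV ≠ ∞ := ENNReal.ofReal_ne_top
  have hcEt : cE ≠ ∞ := ENNReal.ofReal_ne_top
  have hcGt : cG ≠ ∞ := by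
    rw [hcG]
    exact ENNReal.mul_ne_top (ENNReal.mul_ne_top (ENNReal.mul_ne_top
      ENNReal.ofReal_ne_top hcVt) hcVt) hcEt
  have hCCt : CC ≠ ∞ := by
    rw [hCC]
    exact ENNReal.mul_ne_top (ENNReal.mul_ne_top (ENNReal.mul_ne_top
      ENNReal.ofReal_ne_top hcVt) hcGt) hcEt
  refine ⟨CC * (2 * κc * cE * cV), ?_, ?_⟩
  · exact ENNReal.mul_ne_top hCCt (ENNReal.mul_ne_top (ENNReal.mul_ne_top
      (ENNReal.mul_ne_top (by norm_num) hκct) ENNReal.ofReal_ne_top) hcVt)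
  intro a b x y y' S T ha hab hh hhR hSsize hTsize hTsnd
  have hb0 : 0 < b := lt_of_lt_of_le ha hab
  set h := dist y y' with hhdef
  set d := dist x y with hddef
  have hd0 : 0 ≤ d := dist_nonneg
  set R := b + d with hRdef
  have hR0 : 0 < R := by rw [hRdef]; linarith
  set q := a + d with hqdef
  have hq0 : 0 < q := by rw [hqdef]; linarith
  set EH : ℝ≥0∞ := ENNReal.ofReal ((h / R) ^ ε) with hEH
  set Eρ : ℝ≥0∞ := ENNReal.ofReal ((b / R) ^ ε) with hEρ
  set N := {z : X | dist z y ≤ q / 2} with hNdef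
  have hGb := G_bound hb hd hC₁ hn hA hε0 he1 he2.le hb0 hh hhR rfl T hTsize hTsnd
  -- pointwise bound on Nᶜ
  have hpt : ∀ z ∈ Nᶜ, ENNReal.ofReal ‖S x z * (T z y - T z y')‖ ≤
      CC * EH * (prof μ x a ε₂ z * prof μ y b ε₂ z + prof μ x a ε₂ z * prof μ y' b ε₂ z) := by
    intro z hz
    have hzN : q / 2 < dist z y := by
      simp only [hNdef, mem_compl_iff, mem_setOf_eq, not_le] at hz
      exact hz
    have ht0 : (0:ℝ) < b + dist z y := by linarith [dist_nonneg (x := z) (y := y)]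
    have hRt : ENNReal.ofReal ((R / (b + dist z y)) ^ ε) ≤ cE := by
      apply ENNReal.ofReal_le_ofReal
      apply Real.rpow_le_rpow (by positivity) _ hε0.le
      rw [div_le_iff₀ ht0]
      rw [hRdef, hqdef] at *
      linarith
    have hS : ENNReal.ofReal ‖S x z‖ ≤ ENNReal.ofReal A * (cV * prof μ x a ε₂ z) := by
      calc ENNReal.ofReal ‖S x z‖ ≤ ENNReal.ofReal (A * sz μ x z a ε₂) :=
            ENNReal.ofReal_le_ofReal (hSsize x z)
        _ = ENNReal.ofReal A * ENNReal.ofReal (sz μ x z a ε₂) := ENNReal.ofReal_mul hA.le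
        _ ≤ ENNReal.ofReal A * (cV * prof μ x a ε₂ z) :=
            mul_le_mul' le_rfl (ofReal_sz_le_prof hb hd hC₁ hn ha (by linarith))
    calc ENNReal.ofReal ‖S x z * (T z y - T z y')‖
        = ENNReal.ofReal ‖S x z‖ * ENNReal.ofReal ‖T z y - T z y'‖ := by
          rw [norm_mul, ENNReal.ofReal_mul (norm_nonneg _)]
      _ ≤ (ENNReal.ofReal A * (cV * prof μ x a ε₂ z)) *
          (cG * EH * (ENNReal.ofReal ((R / (b + dist z y)) ^ ε) *
            (prof μ y b ε₂ z + prof μ y' b ε₂ z))) := mul_le_mul' hS (hGb z)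
      _ ≤ (ENNReal.ofReal A * (cV * prof μ x a ε₂ z)) *
          (cG * EH * (cE * (prof μ y b ε₂ z + prof μ y' b ε₂ z))) := by
          apply mul_le_mul' le_rfl
          apply mul_le_mul' le_rfl
          exact mul_le_mul' hRt le_rfl
      _ = CC * EH * (prof μ x a ε₂ z * prof μ y b ε₂ z +
            prof μ x a ε₂ z * prof μ y' b ε₂ z) := by
          rw [hCC]; ring
  -- integrate
  have hNm : MeasurableSet N :=
    (isClosed_le (continuous_id.dist continuous_const) continuous_const).measurableSet
  have hmeas1 : Measurable fun z => prof μ x a ε₂ z * prof μ y b ε₂ z :=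
    (prof_meas x (by linarith)).mul (prof_meas y (by linarith))
  have hconv1 := hκc a b x y ha hab
  have hconv2 := hκc a b x y' ha hab
  set R' := b + dist x y' with hR'def
  have hR'0 : 0 < R' := by rw [hR'def]; linarith [dist_nonneg (x := x) (y := y')]
  have hRR' : R ≤ 2 * R' := by
    have htr : d ≤ dist x y' + h := by
      rw [hhdef, hddef]
      calc dist x y ≤ dist x y' + dist y' y := dist_triangle x y' y
        _ = dist x y' + dist y y' := by rw [dist_comm y' y]
    rw [hRdef, hR'def]
    linarith [hhR, htr]
  have hterm2 : κc * ENNReal.ofReal ((b / R') ^ ε) * (μ (ball x R'))⁻¹ ≤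
      κc * cE * cV * Eρ * (μ (ball x R))⁻¹ := by
    have h1 : ENNReal.ofReal ((b / R') ^ ε) ≤ cE * Eρ := by
      rw [hcE, hEρ, ← ENNReal.ofReal_mul (by positivity)]
      apply ENNReal.ofReal_le_ofReal
      calc (b / R') ^ ε ≤ (2 * (b / R)) ^ ε := by
            apply Real.rpow_le_rpow (by positivity) _ hε0.le
            rw [div_le_iff₀ hR'0, show 2 * (b / R) * R' = 2 * b * R' / R by ring,
              le_div_iff₀ hR0]
            nlinarith
        _ = 2 ^ ε * (b / R) ^ ε := Real.mul_rpow (by norm_num) (by positivity)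
    have h2 : (μ (ball x R'))⁻¹ ≤ cV * (μ (ball x R))⁻¹ := by
      apply inv_W_comp hb hd (x := x) (z := x) hR0 hR'0 one_le_two
      simp only [dist_self, add_zero]; linarith
    calc κc * ENNReal.ofReal ((b / R') ^ ε) * (μ (ball x R'))⁻¹
        ≤ κc * (cE * Eρ) * (cV * (μ (ball x R))⁻¹) := by
          exact mul_le_mul' (mul_le_mul' le_rfl h1) h2
      _ = κc * cE * cV * Eρ * (μ (ball x R))⁻¹ := by ring
  have hterm1 : κc * ENNReal.ofReal ((b / R) ^ ε) * (μ (ball x R))⁻¹ ≤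
      κc * cE * cV * Eρ * (μ (ball x R))⁻¹ := by
    rw [show κc * cE * cV * Eρ * (μ (ball x R))⁻¹ =
      (κc * Eρ * (μ (ball x R))⁻¹) * (cE * cV) by ring]
    rw [hEρ]
    apply le_mul_of_one_le_right'
    calc (1:ℝ≥0∞) = 1 * 1 := by rw [mul_one]
      _ ≤ cE * cV := mul_le_mul' (by
          rw [hcE, show (1:ℝ≥0∞) = ENNReal.ofReal 1 by simp]
          exact ENNReal.ofReal_le_ofReal (Real.one_le_rpow one_le_two hε0.le))
        (one_le_cV hC₁ hn)
  calc ∫⁻ z in Nᶜ, ENNReal.ofReal ‖S x z * (T z y - T z y')‖ ∂μ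
      ≤ ∫⁻ z in Nᶜ, CC * EH * (prof μ x a ε₂ z * prof μ y b ε₂ z +
          prof μ x a ε₂ z * prof μ y' b ε₂ z) ∂μ := setLIntegral_mono' hNm.compl hpt
    _ ≤ ∫⁻ z, CC * EH * (prof μ x a ε₂ z * prof μ y b ε₂ z +
          prof μ x a ε₂ z * prof μ y' b ε₂ z) ∂μ :=
        lintegral_mono' Measure.restrict_le_self le_rfl
    _ = CC * EH * ∫⁻ z, (prof μ x a ε₂ z * prof μ y b ε₂ z +
          prof μ x a ε₂ z * prof μ y' b ε₂ z) ∂μ :=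
        lintegral_const_mul' _ _ (ENNReal.mul_ne_top hCCt ENNReal.ofReal_ne_top)
    _ = CC * EH * ((∫⁻ z, prof μ x a ε₂ z * prof μ y b ε₂ z ∂μ) +
          ∫⁻ z, prof μ x a ε₂ z * prof μ y' b ε₂ z ∂μ) := by
        rw [lintegral_add_left hmeas1]
    _ ≤ CC * EH * ((κc * cE * cV * Eρ * (μ (ball x R))⁻¹) +
          (κc * cE * cV * Eρ * (μ (ball x R))⁻¹)) := by
        apply mul_le_mul' le_rfl
        exact add_le_add (le_trans hconv1 hterm1) (le_trans hconv2 hterm2)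
    _ = CC * (2 * κc * cE * cV) * EH * Eρ * (μ (ball x R))⁻¹ := by ring
end Aux6

section Aux7
variable {μ : Measure X} {C₁ n : ℝ}
set_option linter.unusedSectionVars false

lemma far_scalar {b m q R ε ε₁ : ℝ} (hb0 : 0 < b) (hm : 0 ≤ m) (hq : m ≤ q / 2)
    (h2b : 2 * b < q) (hqR : q ≤ R) (hR32 : R ≤ 3 / 2 * q) (hε0 : 0 < ε) (he1 : ε ≤ ε₁) :
    (m / q) ^ ε₁ * (R / (b + m)) ^ ε ≤ 2 ^ ε₁ := by
  have hq0 : (0:ℝ) < q := by linarith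
  have hR0 : (0:ℝ) < R := by linarith
  have ht0 : (0:ℝ) < b + m := by linarith
  have htR : b + m ≤ R := by linarith
  have s1 : m / q ≤ 3 / 2 * ((b + m) / R) := by
    rw [div_le_iff₀ hq0, show 3 / 2 * ((b + m) / R) * q = 3 * (b + m) * q / (2 * R) by ring,
      le_div_iff₀ (by linarith)]
    nlinarith
  have s2 : (m / q) ^ ε₁ ≤ (3 / 2 : ℝ) ^ ε₁ * ((b + m) / R) ^ ε₁ := by
    calc (m / q) ^ ε₁ ≤ (3 / 2 * ((b + m) / R)) ^ ε₁ :=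
          Real.rpow_le_rpow (by positivity) s1 (by linarith)
      _ = (3 / 2 : ℝ) ^ ε₁ * ((b + m) / R) ^ ε₁ := Real.mul_rpow (by norm_num) (by positivity)
  have s3 : (R / (b + m)) ^ ε = (((b + m) / R) ^ ε)⁻¹ := by
    rw [show R / (b + m) = ((b + m) / R)⁻¹ by rw [inv_div], Real.inv_rpow (by positivity)]
  have s4 : ((b + m) / R) ^ ε₁ * (((b + m) / R) ^ ε)⁻¹ = ((b + m) / R) ^ (ε₁ - ε) := by
    rw [Real.rpow_sub (by positivity)]
    ring
  have s5 : ((b + m) / R) ^ (ε₁ - ε) ≤ 1 :=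
    Real.rpow_le_one (by positivity) (by rw [div_le_one hR0]; linarith) (by linarith)
  have s6 : (3 / 2 : ℝ) ^ ε₁ ≤ 2 ^ ε₁ :=
    Real.rpow_le_rpow (by norm_num) (by norm_num) (by linarith)
  calc (m / q) ^ ε₁ * (R / (b + m)) ^ ε
      ≤ ((3 / 2 : ℝ) ^ ε₁ * ((b + m) / R) ^ ε₁) * (((b + m) / R) ^ ε)⁻¹ := by
        rw [s3]
        apply mul_le_mul_of_nonneg_right s2 (by positivity)
    _ = (3 / 2 : ℝ) ^ ε₁ * (((b + m) / R) ^ ε₁ * (((b + m) / R) ^ ε)⁻¹) := by ring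
    _ = (3 / 2 : ℝ) ^ ε₁ * ((b + m) / R) ^ (ε₁ - ε) := by rw [s4]
    _ ≤ (3 / 2 : ℝ) ^ ε₁ * 1 := by
        apply mul_le_mul_of_nonneg_left s5 (by positivity)
    _ = (3 / 2 : ℝ) ^ ε₁ := mul_one _
    _ ≤ 2 ^ ε₁ := s6

lemma SC_far (hb : BallsFinitePos μ) (hd : Doubling μ C₁ n) (hC₁ : 1 ≤ C₁) (hn : 0 < n)
    {a b ε ε₂ : ℝ} {x y : X} (ha : 0 < a) (hab : a ≤ b) (hε0 : 0 < ε) (he2 : ε ≤ ε₂)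
    (h2b : 2 * b < a + dist x y) :
    (μ (ball x (a + dist x y)))⁻¹ * ENNReal.ofReal ((a / (a + dist x y)) ^ ε₂) ≤
      ENNReal.ofReal (C₁ * 2 ^ n) * ENNReal.ofReal ((3 / 2 : ℝ) ^ ε₂) *
        ENNReal.ofReal ((b / (b + dist x y)) ^ ε) * (μ (ball x (b + dist x y)))⁻¹ := by
  set d := dist x y with hddef
  have hd0 : 0 ≤ d := dist_nonneg
  set q := a + d with hqdef
  set R := b + d with hRdef
  have hb0 : 0 < b := lt_of_lt_of_le ha hab
  have hq0 : 0 < q := by rw [hqdef]; linarith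
  have hR0 : 0 < R := by rw [hRdef]; linarith
  have hqR : q ≤ R := by rw [hqdef, hRdef]; linarith
  have hR32 : R ≤ 3 / 2 * q := by
    have h2b' : 2 * b < q := h2b
    rw [hqdef] at h2b'
    rw [hRdef, hqdef]
    linarith
  have hinv : (μ (ball x q))⁻¹ ≤ ENNReal.ofReal (C₁ * 2 ^ n) * (μ (ball x R))⁻¹ := by
    apply inv_W_comp hb hd (x := x) (z := x) hR0 hq0 one_le_two
    simp only [dist_self, add_zero]; linarith
  have hrat : ENNReal.ofReal ((a / q) ^ ε₂) ≤
      ENNReal.ofReal ((3 / 2 : ℝ) ^ ε₂) * ENNReal.ofReal ((b / R) ^ ε) := by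
    rw [← ENNReal.ofReal_mul (by positivity)]
    apply ENNReal.ofReal_le_ofReal
    have s1 : (a / q) ^ ε₂ ≤ (3 / 2 * (b / R)) ^ ε₂ := by
      apply Real.rpow_le_rpow (by positivity) _ (by linarith)
      have hRne : R ≠ 0 := ne_of_gt hR0
      have e1 : a / q ≤ 3 * b / (2 * R) := by
        rw [div_le_div_iff₀ hq0 (by linarith : (0:ℝ) < 2 * R)]
        nlinarith
      have e2 : 3 * b / (2 * R) = 3 / 2 * (b / R) := by
        field_simp
      linarith
    have s2 : (3 / 2 * (b / R)) ^ ε₂ = (3 / 2 : ℝ) ^ ε₂ * (b / R) ^ ε₂ :=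
      Real.mul_rpow (by norm_num) (by positivity)
    have s3 : (b / R) ^ ε₂ ≤ (b / R) ^ ε := by
      apply Real.rpow_le_rpow_of_exponent_ge (by positivity) _ he2
      rw [div_le_one hR0]; linarith
    calc (a / q) ^ ε₂ ≤ (3 / 2 : ℝ) ^ ε₂ * (b / R) ^ ε₂ := by rw [← s2]; exact s1
      _ ≤ (3 / 2 : ℝ) ^ ε₂ * (b / R) ^ ε := by
          apply mul_le_mul_of_nonneg_left s3 (by positivity)
  calc (μ (ball x q))⁻¹ * ENNReal.ofReal ((a / q) ^ ε₂)
      ≤ (ENNReal.ofReal (C₁ * 2 ^ n) * (μ (ball x R))⁻¹) *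
        (ENNReal.ofReal ((3 / 2 : ℝ) ^ ε₂) * ENNReal.ofReal ((b / R) ^ ε)) :=
        mul_le_mul' hinv hrat
    _ = _ := by ring

lemma local_asm (hb : BallsFinitePos μ) (hd : Doubling μ C₁ n) (hC₁ : 1 ≤ C₁) (hn : 0 < n)
    {a b ε ε₂ : ℝ} {x y : X} (ha : 0 < a) (hab : a ≤ b) (hε0 : 0 < ε) (he2 : 0 ≤ ε₂)
    (hq2b : a + dist x y ≤ 2 * b) :
    (μ (ball x (a + dist x y)))⁻¹ * ENNReal.ofReal ((a / (a + dist x y)) ^ ε₂) *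
      ((μ (ball y b))⁻¹ * μ (ball y (a + dist x y))) ≤
      ENNReal.ofReal (C₁ * 2 ^ n) * ENNReal.ofReal (C₁ * 5 ^ n) * ENNReal.ofReal ((3:ℝ) ^ ε) *
        ENNReal.ofReal ((b / (b + dist x y)) ^ ε) * (μ (ball x (b + dist x y)))⁻¹ := by
  set d := dist x y with hddef
  have hd0 : 0 ≤ d := dist_nonneg
  set q := a + d with hqdef
  set R := b + d with hRdef
  have hb0 : 0 < b := lt_of_lt_of_le ha hab
  have hq0 : 0 < q := by rw [hqdef]; linarith
  have hR0 : 0 < R := by rw [hRdef]; linarith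
  have hdq : d ≤ q := by rw [hqdef]; linarith
  have hd2b : d ≤ 2 * b := by rw [hqdef] at hq2b; linarith
  have hR3b : R ≤ 3 * b := by rw [hRdef]; linarith
  -- piece 1 : ratio ≤ 1
  have p1 : ENNReal.ofReal ((a / q) ^ ε₂) ≤ 1 := by
    apply ENNReal.ofReal_le_one.2
    apply Real.rpow_le_one (by positivity) _ he2
    apply div_le_one_of_le₀ (by linarith) hq0.le
  -- piece 2 : (μ ball x q)⁻¹ * μ (ball y q) ≤ cV
  have p2 : (μ (ball x q))⁻¹ * μ (ball y q) ≤ ENNReal.ofReal (C₁ * 2 ^ n) := by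
    have h1 : μ (ball y q) ≤ ENNReal.ofReal (C₁ * 2 ^ n) * μ (ball x q) := by
      apply W_comp hd hq0 one_le_two
      rw [dist_comm]; linarith
    calc (μ (ball x q))⁻¹ * μ (ball y q)
        ≤ (μ (ball x q))⁻¹ * (ENNReal.ofReal (C₁ * 2 ^ n) * μ (ball x q)) :=
          mul_le_mul' le_rfl h1
      _ = ENNReal.ofReal (C₁ * 2 ^ n) * ((μ (ball x q))⁻¹ * μ (ball x q)) := by ring
      _ = ENNReal.ofReal (C₁ * 2 ^ n) :=  by
          rw [ENNReal.inv_mul_cancel (W_ne_zero hb hq0) (W_ne_top hb hq0), mul_one]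
  -- piece 3 : (μ ball y b)⁻¹ ≤ C₁5ⁿ (μ ball x R)⁻¹
  have p3 : (μ (ball y b))⁻¹ ≤ ENNReal.ofReal (C₁ * 5 ^ n) * (μ (ball x R))⁻¹ := by
    apply inv_W_comp hb hd (x := x) (z := y) hR0 hb0 (by norm_num)
    linarith
  -- piece 4 : 1 ≤ 3^ε (b/R)^ε
  have p4 : (1:ℝ≥0∞) ≤ ENNReal.ofReal ((3:ℝ) ^ ε) * ENNReal.ofReal ((b / R) ^ ε) := by
    rw [← ENNReal.ofReal_mul (by positivity), ← Real.mul_rpow (by norm_num) (by positivity)]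
    rw [show (1:ℝ≥0∞) = ENNReal.ofReal 1 by simp]
    apply ENNReal.ofReal_le_ofReal
    apply Real.one_le_rpow _ hε0.le
    rw [show (3:ℝ) * (b / R) = 3 * b / R by ring, le_div_iff₀ hR0]
    linarith
  calc (μ (ball x q))⁻¹ * ENNReal.ofReal ((a / q) ^ ε₂) * ((μ (ball y b))⁻¹ * μ (ball y q))
      ≤ (μ (ball x q))⁻¹ * 1 * ((ENNReal.ofReal (C₁ * 5 ^ n) * (μ (ball x R))⁻¹) * μ (ball y q)) := by
        exact mul_le_mul' (mul_le_mul' le_rfl p1) (mul_le_mul' p3 le_rfl)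
    _ = ((μ (ball x q))⁻¹ * μ (ball y q)) * ENNReal.ofReal (C₁ * 5 ^ n) * (μ (ball x R))⁻¹ := by
        ring
    _ ≤ ENNReal.ofReal (C₁ * 2 ^ n) * ENNReal.ofReal (C₁ * 5 ^ n) * (μ (ball x R))⁻¹ := by
        exact mul_le_mul' (mul_le_mul' p2 le_rfl) le_rfl
    _ ≤ ENNReal.ofReal (C₁ * 2 ^ n) * ENNReal.ofReal (C₁ * 5 ^ n) *
        (ENNReal.ofReal ((3:ℝ) ^ ε) * ENNReal.ofReal ((b / R) ^ ε)) * (μ (ball x R))⁻¹ := by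
        rw [show ENNReal.ofReal (C₁ * 2 ^ n) * ENNReal.ofReal (C₁ * 5 ^ n) *
          (ENNReal.ofReal ((3:ℝ) ^ ε) * ENNReal.ofReal ((b / R) ^ ε)) * (μ (ball x R))⁻¹ =
          (ENNReal.ofReal (C₁ * 2 ^ n) * ENNReal.ofReal (C₁ * 5 ^ n) * (μ (ball x R))⁻¹) *
          (ENNReal.ofReal ((3:ℝ) ^ ε) * ENNReal.ofReal ((b / R) ^ ε)) by ring]
        exact le_mul_of_one_le_right' p4
    _ = _ := by ring

end Aux7

section Aux8
variable {μ : Measure X} {C₁ n : ℝ}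
set_option linter.unusedSectionVars false

lemma lint_N_G (hb : BallsFinitePos μ) (hd : Doubling μ C₁ n) (hC₁ : 1 ≤ C₁) (hn : 0 < n)
    {A ε ε₁ ε₂ a b : ℝ} {x y y' : X} (hA : 0 < A) (hε0 : 0 < ε) (he1 : ε ≤ ε₁) (he2 : ε ≤ ε₂)
    (ha : 0 < a) (hab : a ≤ b) (hh : 0 < dist y y') (hhR : dist y y' ≤ (b + dist x y) / 2)
    (hq2b : a + dist x y ≤ 2 * b) (T : X → X → ℂ)
    (hTsize : ∀ p w, ‖T p w‖ ≤ A * sz μ p w b ε₂)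
    (hTsnd : ∀ p w w', dist w w' ≤ (b + dist p w) / 2 →
      ‖T p w - T p w'‖ ≤ A * (dist w w' / (b + dist p w)) ^ ε₁ * sz μ p w b ε₂) :
    ∫⁻ z in {z : X | dist z y ≤ (a + dist x y) / 2}, ENNReal.ofReal ‖T z y - T z y'‖ ∂μ ≤
      (ENNReal.ofReal A * ENNReal.ofReal (C₁ * 2 ^ n) * ENNReal.ofReal (C₁ * 2 ^ n) *
        ENNReal.ofReal (2 ^ ε)) * ENNReal.ofReal ((dist y y' / (b + dist x y)) ^ ε) *
        ENNReal.ofReal ((3:ℝ) ^ ε) *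
        ((1 + ENNReal.ofReal (C₁ * 3 ^ n)) * ((μ (ball y b))⁻¹ * μ (ball y (a + dist x y)))) := by
  have hb0 : 0 < b := lt_of_lt_of_le ha hab
  set d := dist x y with hddef
  have hd0 : 0 ≤ d := dist_nonneg
  set q := a + d with hqdef
  set R := b + d with hRdef
  have hq0 : 0 < q := by rw [hqdef]; linarith
  have hR0 : 0 < R := by rw [hRdef]; linarith
  have hR3b : R ≤ 3 * b := by rw [hRdef]; rw [hqdef] at hq2b; linarith
  set cG : ℝ≥0∞ := ENNReal.ofReal A * ENNReal.ofReal (C₁ * 2 ^ n) *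
    ENNReal.ofReal (C₁ * 2 ^ n) * ENNReal.ofReal (2 ^ ε) with hcG
  set EH : ℝ≥0∞ := ENNReal.ofReal ((dist y y' / R) ^ ε) with hEH
  have hGb := G_bound hb hd hC₁ hn hA hε0 he1 he2 hb0 hh hhR rfl T hTsize hTsnd
  -- pointwise constant bound
  have hpt : ∀ z ∈ {z : X | dist z y ≤ q / 2}, ENNReal.ofReal ‖T z y - T z y'‖ ≤
      cG * EH * ENNReal.ofReal ((3:ℝ) ^ ε) * ((1 + ENNReal.ofReal (C₁ * 3 ^ n)) *
        (μ (ball y b))⁻¹) := by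
    intro z _
    have ht0 : (0:ℝ) < b + dist z y := by linarith [dist_nonneg (x := z) (y := y)]
    have hRt : ENNReal.ofReal ((R / (b + dist z y)) ^ ε) ≤ ENNReal.ofReal ((3:ℝ) ^ ε) := by
      apply ENNReal.ofReal_le_ofReal
      apply Real.rpow_le_rpow (by positivity) _ hε0.le
      rw [div_le_iff₀ ht0]
      have := dist_nonneg (x := z) (y := y)
      linarith
    have hPy : prof μ y b ε₂ z ≤ (μ (ball y b))⁻¹ := prof_le_inv hb0 (by linarith)
    have hPy' : prof μ y' b ε₂ z ≤ ENNReal.ofReal (C₁ * 3 ^ n) * (μ (ball y b))⁻¹ := by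
      refine le_trans (prof_le_inv hb0 (by linarith)) ?_
      apply inv_W_comp hb hd (x := y) (z := y') hb0 hb0 (by norm_num)
      have : dist y y' ≤ 3 / 2 * b := by
        rw [hRdef] at hhR; linarith
      linarith
    calc ENNReal.ofReal ‖T z y - T z y'‖
        ≤ cG * EH * (ENNReal.ofReal ((R / (b + dist z y)) ^ ε) *
            (prof μ y b ε₂ z + prof μ y' b ε₂ z)) := hGb z
      _ ≤ cG * EH * (ENNReal.ofReal ((3:ℝ) ^ ε) *
            ((1 + ENNReal.ofReal (C₁ * 3 ^ n)) * (μ (ball y b))⁻¹)) := by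
          apply mul_le_mul' le_rfl
          apply mul_le_mul' hRt
          calc prof μ y b ε₂ z + prof μ y' b ε₂ z
              ≤ (μ (ball y b))⁻¹ + ENNReal.ofReal (C₁ * 3 ^ n) * (μ (ball y b))⁻¹ :=
                add_le_add hPy hPy'
            _ = (1 + ENNReal.ofReal (C₁ * 3 ^ n)) * (μ (ball y b))⁻¹ := by ring
      _ = cG * EH * ENNReal.ofReal ((3:ℝ) ^ ε) * ((1 + ENNReal.ofReal (C₁ * 3 ^ n)) *
            (μ (ball y b))⁻¹) := by ring
  have hNm : MeasurableSet {z : X | dist z y ≤ q / 2} :=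
    (isClosed_le (continuous_id.dist continuous_const) continuous_const).measurableSet
  calc ∫⁻ z in {z : X | dist z y ≤ q / 2}, ENNReal.ofReal ‖T z y - T z y'‖ ∂μ
      ≤ (cG * EH * ENNReal.ofReal ((3:ℝ) ^ ε) * ((1 + ENNReal.ofReal (C₁ * 3 ^ n)) *
          (μ (ball y b))⁻¹)) * μ {z : X | dist z y ≤ q / 2} := setLint_le_of_le hNm hpt
    _ ≤ (cG * EH * ENNReal.ofReal ((3:ℝ) ^ ε) * ((1 + ENNReal.ofReal (C₁ * 3 ^ n)) *
          (μ (ball y b))⁻¹)) * μ (ball y q) := by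
        apply mul_le_mul' le_rfl
        apply measure_mono
        intro z hz
        simp only [mem_setOf_eq] at hz
        exact mem_ball.2 (by linarith)
    _ = cG * EH * ENNReal.ofReal ((3:ℝ) ^ ε) * ((1 + ENNReal.ofReal (C₁ * 3 ^ n)) *
          ((μ (ball y b))⁻¹ * μ (ball y q))) := by ring

lemma termI_bound (hb : BallsFinitePos μ) (hd : Doubling μ C₁ n) (hC₁ : 1 ≤ C₁) (hn : 0 < n)
    {A ε ε₁ ε₂ : ℝ} (hA : 0 < A) (hε0 : 0 < ε) (he1 : ε ≤ ε₁) (he2 : ε < ε₂) :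
    ∃ κ : ℝ≥0∞, κ ≠ ∞ ∧ ∀ (a b : ℝ) (x y y' : X) (S T : X → X → ℂ), 0 < a → a ≤ b →
      0 < dist y y' → dist y y' ≤ (b + dist x y) / 2 →
      (∀ x' w w', dist w w' ≤ (a + dist x' w) / 2 →
        ‖S x' w - S x' w'‖ ≤ A * (dist w w' / (a + dist x' w)) ^ ε₁ * sz μ x' w a ε₂) →
      (∀ p w, ‖T p w‖ ≤ A * sz μ p w b ε₂) →
      (∀ p w w', dist w w' ≤ (b + dist p w) / 2 →
        ‖T p w - T p w'‖ ≤ A * (dist w w' / (b + dist p w)) ^ ε₁ * sz μ p w b ε₂) →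
      ∫⁻ z in {z : X | dist z y ≤ (a + dist x y) / 2},
          ENNReal.ofReal ‖(S x z - S x y) * (T z y - T z y')‖ ∂μ ≤
        κ * ENNReal.ofReal ((dist y y' / (b + dist x y)) ^ ε) *
          ENNReal.ofReal ((b / (b + dist x y)) ^ ε) * (μ (ball x (b + dist x y)))⁻¹ := by
  have hε₂0 : 0 < ε₂ := lt_trans hε0 he2
  obtain ⟨κ₀, hκ₀t, hκ₀⟩ := prof_lintegral hb hd hε₂0
  set cV : ℝ≥0∞ := ENNReal.ofReal (C₁ * 2 ^ n) with hcV
  set cE : ℝ≥0∞ := ENNReal.ofReal (2 ^ ε) with hcE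
  set cG : ℝ≥0∞ := ENNReal.ofReal A * cV * cV * cE with hcG
  set CC1 : ℝ≥0∞ := ENNReal.ofReal A * cV * cG with hCC1
  have hcVt : cV ≠ ∞ := ENNReal.ofReal_ne_top
  have hcGt : cG ≠ ∞ := by
    rw [hcG]
    exact ENNReal.mul_ne_top (ENNReal.mul_ne_top (ENNReal.mul_ne_top
      ENNReal.ofReal_ne_top hcVt) hcVt) ENNReal.ofReal_ne_top
  have hCC1t : CC1 ≠ ∞ := by
    rw [hCC1]
    exact ENNReal.mul_ne_top (ENNReal.mul_ne_top ENNReal.ofReal_ne_top hcVt) hcGt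
  set κfar : ℝ≥0∞ := CC1 * ENNReal.ofReal ((2:ℝ) ^ ε₁) * (κ₀ + κ₀) *
    (cV * ENNReal.ofReal ((3/2:ℝ) ^ ε₂)) with hκfar
  set κloc : ℝ≥0∞ := CC1 * ENNReal.ofReal ((3:ℝ) ^ ε) * (1 + ENNReal.ofReal (C₁ * 3 ^ n)) *
    (cV * ENNReal.ofReal (C₁ * 5 ^ n) * ENNReal.ofReal ((3:ℝ) ^ ε)) with hκloc
  have hκfart : κfar ≠ ∞ := by
    rw [hκfar]
    exact ENNReal.mul_ne_top (ENNReal.mul_ne_top (ENNReal.mul_ne_top hCC1t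
      ENNReal.ofReal_ne_top) (ENNReal.add_ne_top.2 ⟨hκ₀t, hκ₀t⟩))
      (ENNReal.mul_ne_top hcVt ENNReal.ofReal_ne_top)
  have hκloct : κloc ≠ ∞ := by
    rw [hκloc]
    exact ENNReal.mul_ne_top (ENNReal.mul_ne_top (ENNReal.mul_ne_top hCC1t
      ENNReal.ofReal_ne_top) (ENNReal.add_ne_top.2 ⟨ENNReal.one_ne_top, ENNReal.ofReal_ne_top⟩))
      (ENNReal.mul_ne_top (ENNReal.mul_ne_top hcVt ENNReal.ofReal_ne_top) ENNReal.ofReal_ne_top)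
  refine ⟨κfar + κloc, ENNReal.add_ne_top.2 ⟨hκfart, hκloct⟩, ?_⟩
  intro a b x y y' S T ha hab hh hhR hSsnd hTsize hTsnd
  have hb0 : 0 < b := lt_of_lt_of_le ha hab
  set d := dist x y with hddef
  have hd0 : 0 ≤ d := dist_nonneg
  set q := a + d with hqdef
  set R := b + d with hRdef
  have hq0 : 0 < q := by rw [hqdef]; linarith
  have hR0 : 0 < R := by rw [hRdef]; linarith
  set EH : ℝ≥0∞ := ENNReal.ofReal ((dist y y' / R) ^ ε) with hEH
  set Eρ : ℝ≥0∞ := ENNReal.ofReal ((b / R) ^ ε) with hEρ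
  set N := {z : X | dist z y ≤ q / 2} with hNdef
  have hNm : MeasurableSet N :=
    (isClosed_le (continuous_id.dist continuous_const) continuous_const).measurableSet
  have hGb := G_bound hb hd hC₁ hn hA hε0 he1 he2.le hb0 hh hhR rfl T hTsize hTsnd
  -- bound for the S difference on N
  have hF : ∀ z ∈ N, ENNReal.ofReal ‖S x z - S x y‖ ≤
      ENNReal.ofReal A * ENNReal.ofReal ((dist z y / q) ^ ε₁) *
        (cV * ((μ (ball x q))⁻¹ * ENNReal.ofReal ((a / q) ^ ε₂))) := by
    intro z hz
    have hzN : dist z y ≤ q / 2 := hz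
    have h1 : ‖S x y - S x z‖ ≤ A * (dist y z / q) ^ ε₁ * sz μ x y a ε₂ := by
      rw [hqdef, hddef]
      apply hSsnd x y z
      rw [dist_comm y z]
      have hzN' := hzN
      rw [hqdef, hddef] at hzN'
      exact hzN'
    have h2 : ENNReal.ofReal (sz μ x y a ε₂) ≤
        cV * ((μ (ball x q))⁻¹ * ENNReal.ofReal ((a / q) ^ ε₂)) := by
      rw [hcV, hqdef, hddef]
      have hthis := ofReal_sz_le_prof hb hd hC₁ hn (x := x) (z := y) ha
        (le_of_lt (lt_trans hε0 he2))
      rw [prof] at hthis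
      rw [← mul_assoc]
      rw [← mul_assoc] at hthis
      exact hthis
    calc ENNReal.ofReal ‖S x z - S x y‖ = ENNReal.ofReal ‖S x y - S x z‖ := by
          rw [norm_sub_rev]
      _ ≤ ENNReal.ofReal (A * (dist y z / q) ^ ε₁ * sz μ x y a ε₂) :=
          ENNReal.ofReal_le_ofReal h1
      _ = ENNReal.ofReal (A * (dist y z / q) ^ ε₁) * ENNReal.ofReal (sz μ x y a ε₂) :=
          ENNReal.ofReal_mul (by positivity)
      _ ≤ ENNReal.ofReal (A * (dist y z / q) ^ ε₁) *
          (cV * ((μ (ball x q))⁻¹ * ENNReal.ofReal ((a / q) ^ ε₂))) := mul_le_mul' le_rfl h2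
      _ = _ := by rw [ENNReal.ofReal_mul hA.le, dist_comm y z]
  rcases le_or_gt q (2 * b) with hq2b | hq2b
  · -- local case : use lint_N_G
    have hFc : ∀ z ∈ N, ENNReal.ofReal ‖(S x z - S x y) * (T z y - T z y')‖ ≤
        (ENNReal.ofReal A * (cV * ((μ (ball x q))⁻¹ * ENNReal.ofReal ((a / q) ^ ε₂)))) *
          ENNReal.ofReal ‖T z y - T z y'‖ := by
      intro z hz
      have h1 : ENNReal.ofReal ((dist z y / q) ^ ε₁) ≤ 1 := by
        apply ENNReal.ofReal_le_one.2
        apply Real.rpow_le_one (by positivity) _ (by linarith)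
        apply div_le_one_of_le₀ _ hq0.le
        have : dist z y ≤ q / 2 := hz
        linarith
      calc ENNReal.ofReal ‖(S x z - S x y) * (T z y - T z y')‖
          = ENNReal.ofReal ‖S x z - S x y‖ * ENNReal.ofReal ‖T z y - T z y'‖ := by
            rw [norm_mul, ENNReal.ofReal_mul (norm_nonneg _)]
        _ ≤ (ENNReal.ofReal A * ENNReal.ofReal ((dist z y / q) ^ ε₁) *
            (cV * ((μ (ball x q))⁻¹ * ENNReal.ofReal ((a / q) ^ ε₂)))) *
            ENNReal.ofReal ‖T z y - T z y'‖ := mul_le_mul' (hF z hz) le_rfl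
        _ ≤ _ := by
            apply mul_le_mul' _ le_rfl
            calc ENNReal.ofReal A * ENNReal.ofReal ((dist z y / q) ^ ε₁) *
                (cV * ((μ (ball x q))⁻¹ * ENNReal.ofReal ((a / q) ^ ε₂)))
                ≤ ENNReal.ofReal A * 1 *
                  (cV * ((μ (ball x q))⁻¹ * ENNReal.ofReal ((a / q) ^ ε₂))) := by
                  exact mul_le_mul' (mul_le_mul' le_rfl h1) le_rfl
              _ = _ := by rw [mul_one]
    have hlin := lint_N_G hb hd hC₁ hn hA hε0 he1 he2.le ha hab hh hhR
      (by rw [hqdef, hddef] at hq2b; exact hq2b) T hTsize hTsnd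
    have hlasm := local_asm hb hd hC₁ hn (x := x) (y := y) (ε := ε) (ε₂ := ε₂)
      ha hab hε0 (by linarith) (by rw [hqdef, hddef] at hq2b; exact hq2b)
    calc ∫⁻ z in N, ENNReal.ofReal ‖(S x z - S x y) * (T z y - T z y')‖ ∂μ
        ≤ ∫⁻ z in N, (ENNReal.ofReal A * (cV * ((μ (ball x q))⁻¹ *
            ENNReal.ofReal ((a / q) ^ ε₂)))) * ENNReal.ofReal ‖T z y - T z y'‖ ∂μ :=
          setLIntegral_mono' hNm hFc
      _ = (ENNReal.ofReal A * (cV * ((μ (ball x q))⁻¹ * ENNReal.ofReal ((a / q) ^ ε₂)))) *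
          ∫⁻ z in N, ENNReal.ofReal ‖T z y - T z y'‖ ∂μ := by
          apply lintegral_const_mul'
          exact ENNReal.mul_ne_top ENNReal.ofReal_ne_top (ENNReal.mul_ne_top hcVt
            (ENNReal.mul_ne_top (ENNReal.inv_ne_top.2 (W_ne_zero hb hq0))
              ENNReal.ofReal_ne_top))
      _ ≤ (ENNReal.ofReal A * (cV * ((μ (ball x q))⁻¹ * ENNReal.ofReal ((a / q) ^ ε₂)))) *
          (cG * EH * ENNReal.ofReal ((3:ℝ) ^ ε) * ((1 + ENNReal.ofReal (C₁ * 3 ^ n)) *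
            ((μ (ball y b))⁻¹ * μ (ball y q)))) := by
          apply mul_le_mul' le_rfl
          rw [hcG, hcV, hcE, hEH, hNdef, hqdef, hRdef, hddef]
          exact hlin
      _ = (CC1 * ENNReal.ofReal ((3:ℝ) ^ ε) * (1 + ENNReal.ofReal (C₁ * 3 ^ n)) * EH) *
          ((μ (ball x q))⁻¹ * ENNReal.ofReal ((a / q) ^ ε₂) *
            ((μ (ball y b))⁻¹ * μ (ball y q))) := by
          rw [hCC1]; ring
      _ ≤ (CC1 * ENNReal.ofReal ((3:ℝ) ^ ε) * (1 + ENNReal.ofReal (C₁ * 3 ^ n)) * EH) *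
          (cV * ENNReal.ofReal (C₁ * 5 ^ n) * ENNReal.ofReal ((3:ℝ) ^ ε) * Eρ *
            (μ (ball x R))⁻¹) := by
          apply mul_le_mul' le_rfl
          rw [hcV, hEρ, hqdef, hRdef, hddef]
          exact hlasm
      _ = κloc * EH * Eρ * (μ (ball x R))⁻¹ := by rw [hκloc]; ring
      _ ≤ (κfar + κloc) * EH * Eρ * (μ (ball x R))⁻¹ := by
          exact mul_le_mul' (mul_le_mul' (mul_le_mul' le_add_self le_rfl) le_rfl) le_rfl
  · -- far case
    have hq0' : 0 < q := hq0
    have hqR : q ≤ R := by rw [hqdef, hRdef]; linarith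
    have hR32 : R ≤ 3 / 2 * q := by
      have h2b' : 2 * b < q := hq2b
      rw [hqdef] at h2b'
      rw [hRdef, hqdef]
      linarith
    have hpt : ∀ z ∈ N, ENNReal.ofReal ‖(S x z - S x y) * (T z y - T z y')‖ ≤
        (CC1 * ((μ (ball x q))⁻¹ * ENNReal.ofReal ((a / q) ^ ε₂)) * EH *
          ENNReal.ofReal ((2:ℝ) ^ ε₁)) * (prof μ y b ε₂ z + prof μ y' b ε₂ z) := by
      intro z hz
      have hzN : dist z y ≤ q / 2 := hz
      have hm0 : 0 ≤ dist z y := dist_nonneg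
      have hscalar : ENNReal.ofReal ((dist z y / q) ^ ε₁) *
          ENNReal.ofReal ((R / (b + dist z y)) ^ ε) ≤ ENNReal.ofReal ((2:ℝ) ^ ε₁) := by
        rw [← ENNReal.ofReal_mul (by positivity)]
        apply ENNReal.ofReal_le_ofReal
        exact far_scalar hb0 hm0 hzN hq2b hqR hR32 hε0 he1
      calc ENNReal.ofReal ‖(S x z - S x y) * (T z y - T z y')‖
          = ENNReal.ofReal ‖S x z - S x y‖ * ENNReal.ofReal ‖T z y - T z y'‖ := by
            rw [norm_mul, ENNReal.ofReal_mul (norm_nonneg _)]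
        _ ≤ (ENNReal.ofReal A * ENNReal.ofReal ((dist z y / q) ^ ε₁) *
            (cV * ((μ (ball x q))⁻¹ * ENNReal.ofReal ((a / q) ^ ε₂)))) *
            (cG * EH * (ENNReal.ofReal ((R / (b + dist z y)) ^ ε) *
              (prof μ y b ε₂ z + prof μ y' b ε₂ z))) := mul_le_mul' (hF z hz) (hGb z)
        _ = (CC1 * ((μ (ball x q))⁻¹ * ENNReal.ofReal ((a / q) ^ ε₂)) * EH) *
            ((ENNReal.ofReal ((dist z y / q) ^ ε₁) *
              ENNReal.ofReal ((R / (b + dist z y)) ^ ε)) *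
              (prof μ y b ε₂ z + prof μ y' b ε₂ z)) := by
            rw [hCC1]; ring
        _ ≤ (CC1 * ((μ (ball x q))⁻¹ * ENNReal.ofReal ((a / q) ^ ε₂)) * EH) *
            (ENNReal.ofReal ((2:ℝ) ^ ε₁) * (prof μ y b ε₂ z + prof μ y' b ε₂ z)) := by
            exact mul_le_mul' le_rfl (mul_le_mul' hscalar le_rfl)
        _ = _ := by ring
    have hSCfar := SC_far hb hd hC₁ hn (x := x) (y := y) (ε := ε) ha hab hε0 he2.le
      (by rw [hqdef, hddef] at hq2b; exact hq2b)
    calc ∫⁻ z in N, ENNReal.ofReal ‖(S x z - S x y) * (T z y - T z y')‖ ∂μ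
        ≤ ∫⁻ z in N, (CC1 * ((μ (ball x q))⁻¹ * ENNReal.ofReal ((a / q) ^ ε₂)) * EH *
            ENNReal.ofReal ((2:ℝ) ^ ε₁)) * (prof μ y b ε₂ z + prof μ y' b ε₂ z) ∂μ :=
          setLIntegral_mono' hNm hpt
      _ ≤ ∫⁻ z, (CC1 * ((μ (ball x q))⁻¹ * ENNReal.ofReal ((a / q) ^ ε₂)) * EH *
            ENNReal.ofReal ((2:ℝ) ^ ε₁)) * (prof μ y b ε₂ z + prof μ y' b ε₂ z) ∂μ :=
          lintegral_mono' Measure.restrict_le_self le_rfl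
      _ = (CC1 * ((μ (ball x q))⁻¹ * ENNReal.ofReal ((a / q) ^ ε₂)) * EH *
            ENNReal.ofReal ((2:ℝ) ^ ε₁)) *
          ∫⁻ z, (prof μ y b ε₂ z + prof μ y' b ε₂ z) ∂μ := by
          apply lintegral_const_mul'
          exact ENNReal.mul_ne_top (ENNReal.mul_ne_top (ENNReal.mul_ne_top hCC1t
            (ENNReal.mul_ne_top (ENNReal.inv_ne_top.2 (W_ne_zero hb hq0))
              ENNReal.ofReal_ne_top)) ENNReal.ofReal_ne_top) ENNReal.ofReal_ne_top
      _ = (CC1 * ((μ (ball x q))⁻¹ * ENNReal.ofReal ((a / q) ^ ε₂)) * EH *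
            ENNReal.ofReal ((2:ℝ) ^ ε₁)) *
          ((∫⁻ z, prof μ y b ε₂ z ∂μ) + ∫⁻ z, prof μ y' b ε₂ z ∂μ) := by
          rw [lintegral_add_left (prof_meas y hε₂0.le)]
      _ ≤ (CC1 * ((μ (ball x q))⁻¹ * ENNReal.ofReal ((a / q) ^ ε₂)) * EH *
            ENNReal.ofReal ((2:ℝ) ^ ε₁)) * (κ₀ + κ₀) := by
          exact mul_le_mul' le_rfl (add_le_add (hκ₀ y b hb0) (hκ₀ y' b hb0))
      _ = (CC1 * ENNReal.ofReal ((2:ℝ) ^ ε₁) * (κ₀ + κ₀) * EH) *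
          ((μ (ball x q))⁻¹ * ENNReal.ofReal ((a / q) ^ ε₂)) := by ring
      _ ≤ (CC1 * ENNReal.ofReal ((2:ℝ) ^ ε₁) * (κ₀ + κ₀) * EH) *
          (cV * ENNReal.ofReal ((3/2:ℝ) ^ ε₂) * Eρ * (μ (ball x R))⁻¹) := by
          apply mul_le_mul' le_rfl
          rw [hcV, hEρ, hqdef, hRdef, hddef]
          calc (μ (ball x (a + dist x y)))⁻¹ * ENNReal.ofReal ((a / (a + dist x y)) ^ ε₂)
              ≤ ENNReal.ofReal (C₁ * 2 ^ n) * ENNReal.ofReal ((3/2:ℝ) ^ ε₂) *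
                ENNReal.ofReal ((b / (b + dist x y)) ^ ε) *
                (μ (ball x (b + dist x y)))⁻¹ := hSCfar
            _ = _ := by ring
      _ = κfar * EH * Eρ * (μ (ball x R))⁻¹ := by rw [hκfar]; ring
      _ ≤ (κfar + κloc) * EH * Eρ * (μ (ball x R))⁻¹ := by
          exact mul_le_mul' (mul_le_mul' (mul_le_mul' le_self_add le_rfl) le_rfl) le_rfl

end Aux8

section Aux9
variable {μ : Measure X} {C₁ n : ℝ}
set_option linter.unusedSectionVars false

lemma termIII_bound (hb : BallsFinitePos μ) (hd : Doubling μ C₁ n) (hC₁ : 1 ≤ C₁) (hn : 0 < n)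
    {A ε ε₁ ε₂ : ℝ} (hA : 0 < A) (hε0 : 0 < ε) (he1 : ε ≤ ε₁) (he2 : ε < ε₂) :
    ∃ κ : ℝ≥0∞, κ ≠ ∞ ∧ ∀ (a b : ℝ) (x y y' : X) (S T : X → X → ℂ), 0 < a → a ≤ b →
      0 < dist y y' → dist y y' ≤ (b + dist x y) / 2 →
      (∀ x' y'', ‖S x' y''‖ ≤ A * sz μ x' y'' a ε₂) →
      (∀ p w, ‖T p w‖ ≤ A * sz μ p w b ε₂) →
      (∀ p w w', dist w w' ≤ (b + dist p w) / 2 →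
        ‖T p w - T p w'‖ ≤ A * (dist w w' / (b + dist p w)) ^ ε₁ * sz μ p w b ε₂) →
      Integrable (fun z => T z y) μ → Integrable (fun z => T z y') μ →
      (∫ z, T z y ∂μ) = 1 → (∫ z, T z y' ∂μ) = 1 →
      ENNReal.ofReal (‖S x y‖ *
          ‖∫ z in {z : X | dist z y ≤ (a + dist x y) / 2}ᶜ, (T z y - T z y') ∂μ‖) ≤
        κ * ENNReal.ofReal ((dist y y' / (b + dist x y)) ^ ε) *
          ENNReal.ofReal ((b / (b + dist x y)) ^ ε) * (μ (ball x (b + dist x y)))⁻¹ := by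
  have hε₂0 : 0 < ε₂ := lt_trans hε0 he2
  obtain ⟨κ₀, hκ₀t, hκ₀⟩ := prof_lintegral hb hd hε₂0
  set cV : ℝ≥0∞ := ENNReal.ofReal (C₁ * 2 ^ n) with hcV
  set cE : ℝ≥0∞ := ENNReal.ofReal (2 ^ ε) with hcE
  set cG : ℝ≥0∞ := ENNReal.ofReal A * cV * cV * cE with hcG
  have hcVt : cV ≠ ∞ := ENNReal.ofReal_ne_top
  have hcGt : cG ≠ ∞ := by
    rw [hcG]
    exact ENNReal.mul_ne_top (ENNReal.mul_ne_top (ENNReal.mul_ne_top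
      ENNReal.ofReal_ne_top hcVt) hcVt) ENNReal.ofReal_ne_top
  set κfar : ℝ≥0∞ := (ENNReal.ofReal A * cV) * (cV * ENNReal.ofReal ((3/2:ℝ) ^ ε₂)) *
    (cG * cE * (κ₀ + κ₀)) with hκfar
  set κloc : ℝ≥0∞ := (ENNReal.ofReal A * cV) * (cG * ENNReal.ofReal ((3:ℝ) ^ ε) *
    (1 + ENNReal.ofReal (C₁ * 3 ^ n))) *
    (cV * ENNReal.ofReal (C₁ * 5 ^ n) * ENNReal.ofReal ((3:ℝ) ^ ε)) with hκloc
  have hκfart : κfar ≠ ∞ := by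
    rw [hκfar]
    exact ENNReal.mul_ne_top (ENNReal.mul_ne_top (ENNReal.mul_ne_top ENNReal.ofReal_ne_top hcVt)
      (ENNReal.mul_ne_top hcVt ENNReal.ofReal_ne_top))
      (ENNReal.mul_ne_top (ENNReal.mul_ne_top hcGt ENNReal.ofReal_ne_top)
        (ENNReal.add_ne_top.2 ⟨hκ₀t, hκ₀t⟩))
  have hκloct : κloc ≠ ∞ := by
    rw [hκloc]
    exact ENNReal.mul_ne_top (ENNReal.mul_ne_top (ENNReal.mul_ne_top ENNReal.ofReal_ne_top hcVt)
      (ENNReal.mul_ne_top (ENNReal.mul_ne_top hcGt ENNReal.ofReal_ne_top)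
        (ENNReal.add_ne_top.2 ⟨ENNReal.one_ne_top, ENNReal.ofReal_ne_top⟩)))
      (ENNReal.mul_ne_top (ENNReal.mul_ne_top hcVt ENNReal.ofReal_ne_top)
        ENNReal.ofReal_ne_top)
  refine ⟨κfar + κloc, ENNReal.add_ne_top.2 ⟨hκfart, hκloct⟩, ?_⟩
  intro a b x y y' S T ha hab hh hhR hSsize hTsize hTsnd hTy hTy' hTone hTone2
  have hb0 : 0 < b := lt_of_lt_of_le ha hab
  set d := dist x y with hddef
  have hd0 : 0 ≤ d := dist_nonneg
  set q := a + d with hqdef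
  set R := b + d with hRdef
  have hq0 : 0 < q := by rw [hqdef]; linarith
  have hR0 : 0 < R := by rw [hRdef]; linarith
  set EH : ℝ≥0∞ := ENNReal.ofReal ((dist y y' / R) ^ ε) with hEH
  set Eρ : ℝ≥0∞ := ENNReal.ofReal ((b / R) ^ ε) with hEρ
  set N := {z : X | dist z y ≤ q / 2} with hNdef
  have hNm : MeasurableSet N :=
    (isClosed_le (continuous_id.dist continuous_const) continuous_const).measurableSet
  have hGb := G_bound hb hd hC₁ hn hA hε0 he1 he2.le hb0 hh hhR rfl T hTsize hTsnd
  -- bound on ‖S x y‖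
  have hSxy : ENNReal.ofReal ‖S x y‖ ≤
      (ENNReal.ofReal A * cV) * ((μ (ball x q))⁻¹ * ENNReal.ofReal ((a / q) ^ ε₂)) := by
    rw [hcV, hqdef, hddef]
    calc ENNReal.ofReal ‖S x y‖ ≤ ENNReal.ofReal (A * sz μ x y a ε₂) :=
          ENNReal.ofReal_le_ofReal (hSsize x y)
      _ = ENNReal.ofReal A * ENNReal.ofReal (sz μ x y a ε₂) := ENNReal.ofReal_mul hA.le
      _ ≤ ENNReal.ofReal A * (ENNReal.ofReal (C₁ * 2 ^ n) * prof μ x a ε₂ y) :=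
          mul_le_mul' le_rfl (ofReal_sz_le_prof hb hd hC₁ hn ha hε₂0.le)
      _ = _ := by rw [prof]; ring
  rcases le_or_gt q (2 * b) with hq2b | hq2b
  · -- local case : flip to N
    have hint0 : (∫ z, (T z y - T z y') ∂μ) = 0 := by
      rw [integral_sub hTy hTy', hTone, hTone2, sub_self]
    have hTsub : Integrable (fun z => T z y - T z y') μ := hTy.sub hTy'
    have hflip : (∫ z in Nᶜ, (T z y - T z y') ∂μ) = - ∫ z in N, (T z y - T z y') ∂μ := by
      have hsum := integral_add_compl hNm hTsub
      rw [hint0] at hsum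
      exact eq_neg_of_add_eq_zero_right hsum
    have hNbound : ENNReal.ofReal ‖∫ z in Nᶜ, (T z y - T z y') ∂μ‖ ≤
        ∫⁻ z in N, ENNReal.ofReal ‖T z y - T z y'‖ ∂μ := by
      rw [hflip, norm_neg]
      calc ENNReal.ofReal ‖∫ z in N, (T z y - T z y') ∂μ‖
          ≤ ENNReal.ofReal (∫⁻ z in N, ENNReal.ofReal ‖T z y - T z y'‖ ∂μ).toReal :=
            ENNReal.ofReal_le_ofReal (norm_integral_le_lintegral_norm _)
        _ ≤ _ := ENNReal.ofReal_toReal_le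
    have hlin := lint_N_G hb hd hC₁ hn hA hε0 he1 he2.le ha hab hh hhR
      (by rw [hqdef, hddef] at hq2b; exact hq2b) T hTsize hTsnd
    have hlasm := local_asm hb hd hC₁ hn (x := x) (y := y) (ε := ε) (ε₂ := ε₂)
      ha hab hε0 hε₂0.le (by rw [hqdef, hddef] at hq2b; exact hq2b)
    calc ENNReal.ofReal (‖S x y‖ * ‖∫ z in Nᶜ, (T z y - T z y') ∂μ‖)
        = ENNReal.ofReal ‖S x y‖ * ENNReal.ofReal ‖∫ z in Nᶜ, (T z y - T z y') ∂μ‖ :=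
          ENNReal.ofReal_mul (norm_nonneg _)
      _ ≤ ((ENNReal.ofReal A * cV) * ((μ (ball x q))⁻¹ * ENNReal.ofReal ((a / q) ^ ε₂))) *
          ∫⁻ z in N, ENNReal.ofReal ‖T z y - T z y'‖ ∂μ := mul_le_mul' hSxy hNbound
      _ ≤ ((ENNReal.ofReal A * cV) * ((μ (ball x q))⁻¹ * ENNReal.ofReal ((a / q) ^ ε₂))) *
          (cG * EH * ENNReal.ofReal ((3:ℝ) ^ ε) * ((1 + ENNReal.ofReal (C₁ * 3 ^ n)) *
            ((μ (ball y b))⁻¹ * μ (ball y q)))) := by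
          apply mul_le_mul' le_rfl
          rw [hcG, hcV, hcE, hEH, hNdef, hqdef, hRdef, hddef]
          exact hlin
      _ = ((ENNReal.ofReal A * cV) * (cG * ENNReal.ofReal ((3:ℝ) ^ ε) *
            (1 + ENNReal.ofReal (C₁ * 3 ^ n))) * EH) *
          ((μ (ball x q))⁻¹ * ENNReal.ofReal ((a / q) ^ ε₂) *
            ((μ (ball y b))⁻¹ * μ (ball y q))) := by ring
      _ ≤ ((ENNReal.ofReal A * cV) * (cG * ENNReal.ofReal ((3:ℝ) ^ ε) *
            (1 + ENNReal.ofReal (C₁ * 3 ^ n))) * EH) *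
          (cV * ENNReal.ofReal (C₁ * 5 ^ n) * ENNReal.ofReal ((3:ℝ) ^ ε) * Eρ *
            (μ (ball x R))⁻¹) := by
          apply mul_le_mul' le_rfl
          rw [hcV, hEρ, hqdef, hRdef, hddef]
          exact hlasm
      _ = κloc * EH * Eρ * (μ (ball x R))⁻¹ := by rw [hκloc]; ring
      _ ≤ (κfar + κloc) * EH * Eρ * (μ (ball x R))⁻¹ := by
          exact mul_le_mul' (mul_le_mul' (mul_le_mul' le_add_self le_rfl) le_rfl) le_rfl
  · -- far case
    have hNcbound : ENNReal.ofReal ‖∫ z in Nᶜ, (T z y - T z y') ∂μ‖ ≤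
        cG * EH * cE * (κ₀ + κ₀) := by
      have hptG : ∀ z ∈ Nᶜ, ENNReal.ofReal ‖T z y - T z y'‖ ≤
          (cG * EH * cE) * (prof μ y b ε₂ z + prof μ y' b ε₂ z) := by
        intro z hz
        have hzN : q / 2 < dist z y := by
          simp only [hNdef, mem_compl_iff, mem_setOf_eq, not_le] at hz
          exact hz
        have ht0 : (0:ℝ) < b + dist z y := by linarith [dist_nonneg (x := z) (y := y)]
        have hRt : ENNReal.ofReal ((R / (b + dist z y)) ^ ε) ≤ cE := by
          rw [hcE]
          apply ENNReal.ofReal_le_ofReal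
          apply Real.rpow_le_rpow (by positivity) _ hε0.le
          rw [div_le_iff₀ ht0]
          rw [hRdef, hqdef] at *
          linarith
        calc ENNReal.ofReal ‖T z y - T z y'‖
            ≤ cG * EH * (ENNReal.ofReal ((R / (b + dist z y)) ^ ε) *
                (prof μ y b ε₂ z + prof μ y' b ε₂ z)) := hGb z
          _ ≤ cG * EH * (cE * (prof μ y b ε₂ z + prof μ y' b ε₂ z)) :=
              mul_le_mul' le_rfl (mul_le_mul' hRt le_rfl)
          _ = (cG * EH * cE) * (prof μ y b ε₂ z + prof μ y' b ε₂ z) := by ring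
      calc ENNReal.ofReal ‖∫ z in Nᶜ, (T z y - T z y') ∂μ‖
          ≤ ENNReal.ofReal (∫⁻ z in Nᶜ, ENNReal.ofReal ‖T z y - T z y'‖ ∂μ).toReal :=
            ENNReal.ofReal_le_ofReal (norm_integral_le_lintegral_norm _)
        _ ≤ ∫⁻ z in Nᶜ, ENNReal.ofReal ‖T z y - T z y'‖ ∂μ := ENNReal.ofReal_toReal_le
        _ ≤ ∫⁻ z in Nᶜ, (cG * EH * cE) * (prof μ y b ε₂ z + prof μ y' b ε₂ z) ∂μ :=
            setLIntegral_mono' hNm.compl hptG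
        _ ≤ ∫⁻ z, (cG * EH * cE) * (prof μ y b ε₂ z + prof μ y' b ε₂ z) ∂μ :=
            lintegral_mono' Measure.restrict_le_self le_rfl
        _ = (cG * EH * cE) * ∫⁻ z, (prof μ y b ε₂ z + prof μ y' b ε₂ z) ∂μ := by
            apply lintegral_const_mul'
            exact ENNReal.mul_ne_top (ENNReal.mul_ne_top hcGt ENNReal.ofReal_ne_top)
              ENNReal.ofReal_ne_top
        _ = (cG * EH * cE) * ((∫⁻ z, prof μ y b ε₂ z ∂μ) + ∫⁻ z, prof μ y' b ε₂ z ∂μ) := by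
            rw [lintegral_add_left (prof_meas y hε₂0.le)]
        _ ≤ (cG * EH * cE) * (κ₀ + κ₀) :=
            mul_le_mul' le_rfl (add_le_add (hκ₀ y b hb0) (hκ₀ y' b hb0))
        _ = cG * EH * cE * (κ₀ + κ₀) := by ring
    have hSCfar := SC_far hb hd hC₁ hn (x := x) (y := y) (ε := ε) ha hab hε0 he2.le
      (by rw [hqdef, hddef] at hq2b; exact hq2b)
    calc ENNReal.ofReal (‖S x y‖ * ‖∫ z in Nᶜ, (T z y - T z y') ∂μ‖)
        = ENNReal.ofReal ‖S x y‖ * ENNReal.ofReal ‖∫ z in Nᶜ, (T z y - T z y') ∂μ‖ :=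
          ENNReal.ofReal_mul (norm_nonneg _)
      _ ≤ ((ENNReal.ofReal A * cV) * ((μ (ball x q))⁻¹ * ENNReal.ofReal ((a / q) ^ ε₂))) *
          (cG * EH * cE * (κ₀ + κ₀)) := mul_le_mul' hSxy hNcbound
      _ ≤ ((ENNReal.ofReal A * cV) * (cV * ENNReal.ofReal ((3/2:ℝ) ^ ε₂) * Eρ *
            (μ (ball x R))⁻¹)) * (cG * EH * cE * (κ₀ + κ₀)) := by
          apply mul_le_mul' _ le_rfl
          apply mul_le_mul' le_rfl
          rw [hcV, hEρ, hqdef, hRdef, hddef]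
          calc (μ (ball x (a + dist x y)))⁻¹ * ENNReal.ofReal ((a / (a + dist x y)) ^ ε₂)
              ≤ ENNReal.ofReal (C₁ * 2 ^ n) * ENNReal.ofReal ((3/2:ℝ) ^ ε₂) *
                ENNReal.ofReal ((b / (b + dist x y)) ^ ε) *
                (μ (ball x (b + dist x y)))⁻¹ := hSCfar
            _ = _ := by ring
      _ = κfar * EH * Eρ * (μ (ball x R))⁻¹ := by rw [hκfar]; ring
      _ ≤ (κfar + κloc) * EH * Eρ * (μ (ball x R))⁻¹ := by
          exact mul_le_mul' (mul_le_mul' (mul_le_mul' le_self_add le_rfl) le_rfl) le_rfl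

end Aux9

section Aux10
variable {μ : Measure X} {C₁ n : ℝ}
set_option linter.unusedSectionVars false

lemma sz_le_inv_vol {x z : X} {a ε₂ : ℝ} (ha : 0 < a) (he : 0 ≤ ε₂) (hb : BallsFinitePos μ) :
    sz μ x z a ε₂ ≤ (vol μ x a)⁻¹ := by
  have hv0 : 0 < vol μ x a := ENNReal.toReal_pos (W_ne_zero hb ha) (W_ne_top hb ha)
  have hd0 : (0:ℝ) ≤ vol μ x (dist x z) := ENNReal.toReal_nonneg
  rw [sz]
  calc (vol μ x a + vol μ x (dist x z))⁻¹ * (a / (a + dist x z)) ^ ε₂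
      ≤ (vol μ x a)⁻¹ * 1 := by
        apply mul_le_mul
        · exact inv_anti₀ hv0 (by linarith)
        · apply Real.rpow_le_one (by positivity) _ he
          apply div_le_one_of_le₀ (by linarith [dist_nonneg (x := x) (y := z)])
            (by linarith [dist_nonneg (x := x) (y := z)])
        · positivity
        · positivity
    _ = (vol μ x a)⁻¹ := mul_one _

lemma size_master (hb : BallsFinitePos μ) (hd : Doubling μ C₁ n) (hC₁ : 1 ≤ C₁) (hn : 0 < n)
    {A ε ε₂ : ℝ} (hA : 0 < A) (hε0 : 0 < ε) (he2 : ε < ε₂) :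
    ∃ Cs : ℝ, 0 < Cs ∧ ∀ (a b : ℝ) (x y : X) (S T : X → X → ℂ), 0 < a → a ≤ b →
      (∀ x' y'', ‖S x' y''‖ ≤ A * sz μ x' y'' a ε₂) →
      (∀ p w, ‖T p w‖ ≤ A * sz μ p w b ε₂) →
      ‖∫ z, S x z * T z y ∂μ‖ ≤ Cs * sz μ x y b ε := by
  have hε₂0 : 0 < ε₂ := lt_trans hε0 he2
  obtain ⟨κc, hκct, hκc⟩ := conv_bound hb hd hC₁ hn hε0 he2.le
  set cV : ℝ≥0∞ := ENNReal.ofReal (C₁ * 2 ^ n) with hcV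
  have hcVt : cV ≠ ∞ := ENNReal.ofReal_ne_top
  set cc : ℝ≥0∞ := (ENNReal.ofReal A * cV) * (ENNReal.ofReal A * (cV * cV)) with hcc
  have hcct : cc ≠ ∞ := by
    rw [hcc]
    exact ENNReal.mul_ne_top (ENNReal.mul_ne_top ENNReal.ofReal_ne_top hcVt)
      (ENNReal.mul_ne_top ENNReal.ofReal_ne_top (ENNReal.mul_ne_top hcVt hcVt))
  set κt : ℝ≥0∞ := cc * κc with hκt
  have hκtt : κt ≠ ∞ := ENNReal.mul_ne_top hcct hκct
  refine ⟨2 * κt.toReal + 1, by positivity, ?_⟩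
  intro a b x y S T ha hab hSsize hTsize
  have hb0 : 0 < b := lt_of_lt_of_le ha hab
  set R := b + dist x y with hRdef
  have hR0 : 0 < R := by rw [hRdef]; linarith [dist_nonneg (x := x) (y := y)]
  have hpt : ∀ z, ENNReal.ofReal ‖S x z * T z y‖ ≤
      cc * (prof μ x a ε₂ z * prof μ y b ε₂ z) := by
    intro z
    have h1 : ENNReal.ofReal ‖S x z‖ ≤ ENNReal.ofReal A * (cV * prof μ x a ε₂ z) := by
      calc ENNReal.ofReal ‖S x z‖ ≤ ENNReal.ofReal (A * sz μ x z a ε₂) :=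
            ENNReal.ofReal_le_ofReal (hSsize x z)
        _ = ENNReal.ofReal A * ENNReal.ofReal (sz μ x z a ε₂) := ENNReal.ofReal_mul hA.le
        _ ≤ ENNReal.ofReal A * (cV * prof μ x a ε₂ z) :=
            mul_le_mul' le_rfl (ofReal_sz_le_prof hb hd hC₁ hn ha hε₂0.le)
    have h2 : ENNReal.ofReal ‖T z y‖ ≤ ENNReal.ofReal A * (cV * cV * prof μ y b ε₂ z) := by
      calc ENNReal.ofReal ‖T z y‖ ≤ ENNReal.ofReal (A * sz μ z y b ε₂) :=
            ENNReal.ofReal_le_ofReal (hTsize z y)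
        _ = ENNReal.ofReal A * ENNReal.ofReal (sz μ z y b ε₂) := ENNReal.ofReal_mul hA.le
        _ ≤ ENNReal.ofReal A * (cV * cV * prof μ y b ε₂ z) :=
            mul_le_mul' le_rfl (ofReal_sz_moving_le_prof hb hd hC₁ hn hb0 hε₂0.le)
    calc ENNReal.ofReal ‖S x z * T z y‖
        = ENNReal.ofReal ‖S x z‖ * ENNReal.ofReal ‖T z y‖ := by
          rw [norm_mul, ENNReal.ofReal_mul (norm_nonneg _)]
      _ ≤ (ENNReal.ofReal A * (cV * prof μ x a ε₂ z)) *
          (ENNReal.ofReal A * (cV * cV * prof μ y b ε₂ z)) := mul_le_mul' h1 h2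
      _ = cc * (prof μ x a ε₂ z * prof μ y b ε₂ z) := by rw [hcc]; ring
  have hlint : ∫⁻ z, ENNReal.ofReal ‖S x z * T z y‖ ∂μ ≤
      κt * ENNReal.ofReal ((b / R) ^ ε) * (μ (ball x R))⁻¹ := by
    calc ∫⁻ z, ENNReal.ofReal ‖S x z * T z y‖ ∂μ
        ≤ ∫⁻ z, cc * (prof μ x a ε₂ z * prof μ y b ε₂ z) ∂μ := lintegral_mono hpt
      _ = cc * ∫⁻ z, prof μ x a ε₂ z * prof μ y b ε₂ z ∂μ := lintegral_const_mul' _ _ hcct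
      _ ≤ cc * (κc * ENNReal.ofReal ((b / R) ^ ε) * (μ (ball x R))⁻¹) := by
          apply mul_le_mul' le_rfl
          rw [hRdef]
          exact hκc a b x y ha hab
      _ = κt * ENNReal.ofReal ((b / R) ^ ε) * (μ (ball x R))⁻¹ := by rw [hκt]; ring
  have hWt : μ (ball x R) ≠ ∞ := W_ne_top hb hR0
  have hW0 : μ (ball x R) ≠ 0 := W_ne_zero hb hR0
  have hMt : κt * ENNReal.ofReal ((b / R) ^ ε) * (μ (ball x R))⁻¹ ≠ ∞ :=
    ENNReal.mul_ne_top (ENNReal.mul_ne_top hκtt ENNReal.ofReal_ne_top)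
      (ENNReal.inv_ne_top.2 hW0)
  have step1 : ‖∫ z, S x z * T z y ∂μ‖ ≤
      (κt * ENNReal.ofReal ((b / R) ^ ε) * (μ (ball x R))⁻¹).toReal := by
    calc ‖∫ z, S x z * T z y ∂μ‖ ≤ (∫⁻ z, ENNReal.ofReal ‖S x z * T z y‖ ∂μ).toReal :=
          norm_integral_le_lintegral_norm _
      _ ≤ _ := ENNReal.toReal_mono hMt hlint
  have step2 : (κt * ENNReal.ofReal ((b / R) ^ ε) * (μ (ball x R))⁻¹).toReal =
      κt.toReal * ((b / R) ^ ε * ((μ (ball x R)).toReal)⁻¹) := by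
    rw [ENNReal.toReal_mul, ENNReal.toReal_mul, ENNReal.toReal_ofReal (by positivity),
      ENNReal.toReal_inv]
    ring
  have hWr0 : 0 < (μ (ball x R)).toReal := ENNReal.toReal_pos hW0 hWt
  have step3 : (b / R) ^ ε * ((μ (ball x R)).toReal)⁻¹ ≤ 2 * sz μ x y b ε := by
    have := sz_ge hb (x := x) (y := y) (r := b) (γ := ε) hb0 hε0.le
    rw [← hRdef] at this
    have heq : (b / R) ^ ε * ((μ (ball x R)).toReal)⁻¹ =
        2 * ((2 * (μ (ball x R)).toReal)⁻¹ * (b / R) ^ ε) := by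
      field_simp
    rw [heq]
    linarith
  calc ‖∫ z, S x z * T z y ∂μ‖ ≤ κt.toReal * ((b / R) ^ ε * ((μ (ball x R)).toReal)⁻¹) := by
        rw [← step2]; exact step1
    _ ≤ κt.toReal * (2 * sz μ x y b ε) := by
        apply mul_le_mul_of_nonneg_left step3 ENNReal.toReal_nonneg
    _ = 2 * κt.toReal * sz μ x y b ε := by ring
    _ ≤ (2 * κt.toReal + 1) * sz μ x y b ε := by
        apply mul_le_mul_of_nonneg_right _ (sz_nonneg hb0.le)
        linarith

end Aux10

section Aux11
variable {μ : Measure X} {C₁ n : ℝ}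
set_option linter.unusedSectionVars false

lemma holder_master (hb : BallsFinitePos μ) (hd : Doubling μ C₁ n) (hC₁ : 1 ≤ C₁) (hn : 0 < n)
    {A ε ε₁ ε₂ : ℝ} (hA : 0 < A) (hε0 : 0 < ε) (he1 : ε ≤ ε₁) (he2 : ε < ε₂) :
    ∃ Ch : ℝ, 0 < Ch ∧ ∀ (a b : ℝ) (x y y' : X) (S T : X → X → ℂ), 0 < a → a ≤ b →
      Measurable (Function.uncurry S) → Measurable (Function.uncurry T) →
      (∀ x' y'', ‖S x' y''‖ ≤ A * sz μ x' y'' a ε₂) →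
      (∀ x' w w', dist w w' ≤ (a + dist x' w) / 2 →
        ‖S x' w - S x' w'‖ ≤ A * (dist w w' / (a + dist x' w)) ^ ε₁ * sz μ x' w a ε₂) →
      (∀ p w, ‖T p w‖ ≤ A * sz μ p w b ε₂) →
      (∀ p w w', dist w w' ≤ (b + dist p w) / 2 →
        ‖T p w - T p w'‖ ≤ A * (dist w w' / (b + dist p w)) ^ ε₁ * sz μ p w b ε₂) →
      (∀ w, (∫ z, T z w ∂μ) = 1) →
      dist y y' ≤ (b + dist x y) / 2 →
      ‖(∫ z, S x z * T z y ∂μ) - ∫ z, S x z * T z y' ∂μ‖ ≤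
        Ch * (dist y y' / (b + dist x y)) ^ ε * sz μ x y b ε := by
  have hε₂0 : 0 < ε₂ := lt_trans hε0 he2
  obtain ⟨κI, hκIt, hκI⟩ := termI_bound hb hd hC₁ hn hA hε0 he1 he2
  obtain ⟨κII, hκIIt, hκII⟩ := termII_bound hb hd hC₁ hn hA hε0 he1 he2
  obtain ⟨κIII, hκIIIt, hκIII⟩ := termIII_bound hb hd hC₁ hn hA hε0 he1 he2
  set κS3 : ℝ≥0∞ := κI + κII + κIII with hκS3
  have hκS3t : κS3 ≠ ∞ := by
    rw [hκS3]
    exact ENNReal.add_ne_top.2 ⟨ENNReal.add_ne_top.2 ⟨hκIt, hκIIt⟩, hκIIIt⟩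
  refine ⟨2 * κS3.toReal + 1, by positivity, ?_⟩
  intro a b x y y' S T ha hab hmS hmT hSsize hSsnd hTsize hTsnd hTnorm hhR
  have hb0 : 0 < b := lt_of_lt_of_le ha hab
  by_cases hyy : y = y'
  · subst hyy
    simp only [sub_self, norm_zero, dist_self, zero_div, Real.zero_rpow hε0.ne']
    rw [mul_zero, zero_mul]
  have hh : 0 < dist y y' := dist_pos.2 hyy
  set d := dist x y with hddef
  have hd0 : 0 ≤ d := dist_nonneg
  set R := b + d with hRdef
  have hR0 : 0 < R := by rw [hRdef]; linarith
  set q := a + d with hqdef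
  -- integrability
  have hTy : Integrable (fun z => T z y) μ := by
    by_contra hc
    exact one_ne_zero ((hTnorm y).symm.trans (integral_undef hc))
  have hTy' : Integrable (fun z => T z y') μ := by
    by_contra hc
    exact one_ne_zero ((hTnorm y').symm.trans (integral_undef hc))
  have hSmz : Measurable fun z => S x z := hmS.comp measurable_prodMk_left
  have hTmy : Measurable fun z => T z y := hmT.comp measurable_prodMk_right
  have hTmy' : Measurable fun z => T z y' := hmT.comp measurable_prodMk_right
  have hSb : ∀ z, ‖S x z‖ ≤ A * (vol μ x a)⁻¹ := by
    intro z
    refine le_trans (hSsize x z) ?_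
    exact mul_le_mul_of_nonneg_left (sz_le_inv_vol ha hε₂0.le hb) hA.le
  have hint1 : Integrable (fun z => S x z * T z y) μ := by
    apply Integrable.mono' (hTy.norm.const_mul (A * (vol μ x a)⁻¹))
      ((hSmz.mul hTmy).aestronglyMeasurable)
    apply ae_of_all
    intro z
    rw [Pi.mul_apply, norm_mul]
    exact mul_le_mul_of_nonneg_right (hSb z) (norm_nonneg _)
  have hint2 : Integrable (fun z => S x z * T z y') μ := by
    apply Integrable.mono' (hTy'.norm.const_mul (A * (vol μ x a)⁻¹))
      ((hSmz.mul hTmy').aestronglyMeasurable)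
    apply ae_of_all
    intro z
    rw [Pi.mul_apply, norm_mul]
    exact mul_le_mul_of_nonneg_right (hSb z) (norm_nonneg _)
  have hint3 : Integrable (fun z => S x y * T z y) μ := hTy.const_mul (S x y)
  have hint4 : Integrable (fun z => S x y * T z y') μ := hTy'.const_mul (S x y)
  -- identity
  have expand : (fun z => (S x z - S x y) * (T z y - T z y')) =
      fun z => (S x z * T z y - S x z * T z y') - (S x y * T z y - S x y * T z y') := by
    funext z; ring
  have hintF : Integrable (fun z => (S x z - S x y) * (T z y - T z y')) μ := by
    rw [expand]
    exact ((hint1.sub hint2).sub (hint3.sub hint4))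
  have hTi3 : (∫ z, S x y * T z y ∂μ) = S x y := by
    rw [integral_const_mul, hTnorm y, mul_one]
  have hTi4 : (∫ z, S x y * T z y' ∂μ) = S x y := by
    rw [integral_const_mul, hTnorm y', mul_one]
  have hident : (∫ z, (S x z - S x y) * (T z y - T z y') ∂μ) =
      (∫ z, S x z * T z y ∂μ) - ∫ z, S x z * T z y' ∂μ := by
    have h1 : (∫ z, (S x z * T z y - S x z * T z y') ∂μ) =
        (∫ z, S x z * T z y ∂μ) - ∫ z, S x z * T z y' ∂μ := integral_sub hint1 hint2
    have h2 : (∫ z, (S x y * T z y - S x y * T z y') ∂μ) =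
        (∫ z, S x y * T z y ∂μ) - ∫ z, S x y * T z y' ∂μ := integral_sub hint3 hint4
    have h0 : (∫ z, ((S x z * T z y - S x z * T z y') - (S x y * T z y - S x y * T z y')) ∂μ) =
        (∫ z, (S x z * T z y - S x z * T z y') ∂μ) -
          ∫ z, (S x y * T z y - S x y * T z y') ∂μ :=
      integral_sub (hint1.sub hint2) (hint3.sub hint4)
    rw [expand, h0, h1, h2, hTi3, hTi4, sub_self, sub_zero]
  set N := {z : X | dist z y ≤ q / 2} with hNdef
  have hNm : MeasurableSet N :=
    (isClosed_le (continuous_id.dist continuous_const) continuous_const).measurableSet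
  have hdecomp : (∫ z, (S x z - S x y) * (T z y - T z y') ∂μ) =
      (∫ z in N, (S x z - S x y) * (T z y - T z y') ∂μ) +
        ∫ z in Nᶜ, (S x z - S x y) * (T z y - T z y') ∂μ :=
    (integral_add_compl hNm hintF).symm
  have hintS : Integrable (fun z => S x z * (T z y - T z y')) μ := by
    have e2 : (fun z => S x z * (T z y - T z y')) =
        fun z => S x z * T z y - S x z * T z y' := by funext z; ring
    rw [e2]
    exact hint1.sub hint2
  have hTsub : Integrable (fun z => T z y - T z y') μ := hTy.sub hTy'
  have hsplit2 : (∫ z in Nᶜ, (S x z - S x y) * (T z y - T z y') ∂μ) =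
      (∫ z in Nᶜ, S x z * (T z y - T z y') ∂μ) -
        S x y * ∫ z in Nᶜ, (T z y - T z y') ∂μ := by
    have e : (fun z => (S x z - S x y) * (T z y - T z y')) =
        fun z => S x z * (T z y - T z y') - S x y * (T z y - T z y') := by funext z; ring
    have h1 : (∫ z in Nᶜ, (S x z * (T z y - T z y') - S x y * (T z y - T z y')) ∂μ) =
        (∫ z in Nᶜ, S x z * (T z y - T z y') ∂μ) -
          ∫ z in Nᶜ, S x y * (T z y - T z y') ∂μ :=
      integral_sub hintS.restrict ((hTsub.const_mul (S x y)).restrict)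
    have h2 : (∫ z in Nᶜ, S x y * (T z y - T z y') ∂μ) =
        S x y * ∫ z in Nᶜ, (T z y - T z y') ∂μ := integral_const_mul _ _
    rw [e, h1, h2]
  -- triangle inequality
  set a1 := ‖∫ z in N, (S x z - S x y) * (T z y - T z y') ∂μ‖ with ha1
  set a2 := ‖∫ z in Nᶜ, S x z * (T z y - T z y') ∂μ‖ with ha2
  set a3 := ‖S x y‖ * ‖∫ z in Nᶜ, (T z y - T z y') ∂μ‖ with ha3
  have htri : ‖(∫ z, S x z * T z y ∂μ) - ∫ z, S x z * T z y' ∂μ‖ ≤ a1 + a2 + a3 := by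
    rw [← hident, hdecomp, hsplit2]
    calc ‖(∫ z in N, (S x z - S x y) * (T z y - T z y') ∂μ) +
          ((∫ z in Nᶜ, S x z * (T z y - T z y') ∂μ) -
            S x y * ∫ z in Nᶜ, (T z y - T z y') ∂μ)‖
        ≤ a1 + ‖(∫ z in Nᶜ, S x z * (T z y - T z y') ∂μ) -
            S x y * ∫ z in Nᶜ, (T z y - T z y') ∂μ‖ := norm_add_le _ _
      _ ≤ a1 + (a2 + ‖S x y * ∫ z in Nᶜ, (T z y - T z y') ∂μ‖) := by
          apply add_le_add_right
          exact norm_sub_le _ _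
      _ = a1 + a2 + a3 := by rw [ha3, ← norm_mul]; ring
  -- ennreal bounds
  set EH : ℝ≥0∞ := ENNReal.ofReal ((dist y y' / R) ^ ε) with hEH
  set Eρ : ℝ≥0∞ := ENNReal.ofReal ((b / R) ^ ε) with hEρ
  set Winv : ℝ≥0∞ := (μ (ball x R))⁻¹ with hWinv
  have hb1 : ENNReal.ofReal a1 ≤ κI * EH * Eρ * Winv := by
    calc ENNReal.ofReal a1
        ≤ ENNReal.ofReal (∫⁻ z in N, ENNReal.ofReal
            ‖(S x z - S x y) * (T z y - T z y')‖ ∂μ).toReal := by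
          apply ENNReal.ofReal_le_ofReal
          rw [ha1]
          exact norm_integral_le_lintegral_norm _
      _ ≤ ∫⁻ z in N, ENNReal.ofReal ‖(S x z - S x y) * (T z y - T z y')‖ ∂μ :=
          ENNReal.ofReal_toReal_le
      _ ≤ κI * EH * Eρ * Winv := by
          rw [hEH, hEρ, hWinv, hNdef, hqdef, hRdef, hddef]
          exact hκI a b x y y' S T ha hab hh (by rw [hRdef, hddef] at hhR; exact hhR)
            hSsnd hTsize hTsnd
  have hb2 : ENNReal.ofReal a2 ≤ κII * EH * Eρ * Winv := by
    calc ENNReal.ofReal a2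
        ≤ ENNReal.ofReal (∫⁻ z in Nᶜ, ENNReal.ofReal
            ‖S x z * (T z y - T z y')‖ ∂μ).toReal := by
          apply ENNReal.ofReal_le_ofReal
          rw [ha2]
          exact norm_integral_le_lintegral_norm _
      _ ≤ ∫⁻ z in Nᶜ, ENNReal.ofReal ‖S x z * (T z y - T z y')‖ ∂μ :=
          ENNReal.ofReal_toReal_le
      _ ≤ κII * EH * Eρ * Winv := by
          rw [hEH, hEρ, hWinv, hNdef, hqdef, hRdef, hddef]
          exact hκII a b x y y' S T ha hab hh (by rw [hRdef, hddef] at hhR; exact hhR)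
            hSsize hTsize hTsnd
  have hb3 : ENNReal.ofReal a3 ≤ κIII * EH * Eρ * Winv := by
    rw [ha3, hEH, hEρ, hWinv, hNdef, hqdef, hRdef, hddef]
    exact hκIII a b x y y' S T ha hab hh (by rw [hRdef, hddef] at hhR; exact hhR)
      hSsize hTsize hTsnd hTy hTy' (hTnorm y) (hTnorm y')
  have htot : ENNReal.ofReal ‖(∫ z, S x z * T z y ∂μ) - ∫ z, S x z * T z y' ∂μ‖ ≤
      κS3 * EH * Eρ * Winv := by
    calc ENNReal.ofReal ‖(∫ z, S x z * T z y ∂μ) - ∫ z, S x z * T z y' ∂μ‖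
        ≤ ENNReal.ofReal (a1 + a2 + a3) := ENNReal.ofReal_le_ofReal htri
      _ ≤ ENNReal.ofReal (a1 + a2) + ENNReal.ofReal a3 := ENNReal.ofReal_add_le
      _ ≤ (ENNReal.ofReal a1 + ENNReal.ofReal a2) + ENNReal.ofReal a3 :=
          add_le_add_left ENNReal.ofReal_add_le _
      _ ≤ (κI * EH * Eρ * Winv + κII * EH * Eρ * Winv) + κIII * EH * Eρ * Winv :=
          add_le_add (add_le_add hb1 hb2) hb3
      _ = κS3 * EH * Eρ * Winv := by rw [hκS3]; ring
  have hW0 : μ (ball x R) ≠ 0 := W_ne_zero hb hR0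
  have hWt : μ (ball x R) ≠ ∞ := W_ne_top hb hR0
  have hMt : κS3 * EH * Eρ * Winv ≠ ∞ := by
    rw [hWinv]
    exact ENNReal.mul_ne_top (ENNReal.mul_ne_top (ENNReal.mul_ne_top hκS3t
      ENNReal.ofReal_ne_top) ENNReal.ofReal_ne_top) (ENNReal.inv_ne_top.2 hW0)
  have hreal : ‖(∫ z, S x z * T z y ∂μ) - ∫ z, S x z * T z y' ∂μ‖ ≤
      (κS3 * EH * Eρ * Winv).toReal := by
    rw [show ‖(∫ z, S x z * T z y ∂μ) - ∫ z, S x z * T z y' ∂μ‖ =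
      (ENNReal.ofReal ‖(∫ z, S x z * T z y ∂μ) - ∫ z, S x z * T z y' ∂μ‖).toReal by
        rw [ENNReal.toReal_ofReal (norm_nonneg _)]]
    exact ENNReal.toReal_mono hMt htot
  have hWr0 : 0 < (μ (ball x R)).toReal := ENNReal.toReal_pos hW0 hWt
  have hexp : (κS3 * EH * Eρ * Winv).toReal =
      κS3.toReal * (dist y y' / R) ^ ε * ((b / R) ^ ε * ((μ (ball x R)).toReal)⁻¹) := by
    rw [hEH, hEρ, hWinv, ENNReal.toReal_mul, ENNReal.toReal_mul, ENNReal.toReal_mul,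
      ENNReal.toReal_ofReal (by positivity), ENNReal.toReal_ofReal (by positivity),
      ENNReal.toReal_inv]
    ring
  have step3 : (b / R) ^ ε * ((μ (ball x R)).toReal)⁻¹ ≤ 2 * sz μ x y b ε := by
    have := sz_ge hb (x := x) (y := y) (r := b) (γ := ε) hb0 hε0.le
    rw [← hddef, ← hRdef] at this
    have heq : (b / R) ^ ε * ((μ (ball x R)).toReal)⁻¹ =
        2 * ((2 * (μ (ball x R)).toReal)⁻¹ * (b / R) ^ ε) := by
      field_simp
    rw [heq]
    linarith
  calc ‖(∫ z, S x z * T z y ∂μ) - ∫ z, S x z * T z y' ∂μ‖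
      ≤ κS3.toReal * (dist y y' / R) ^ ε * ((b / R) ^ ε * ((μ (ball x R)).toReal)⁻¹) := by
        rw [← hexp]; exact hreal
    _ ≤ κS3.toReal * (dist y y' / R) ^ ε * (2 * sz μ x y b ε) := by
        apply mul_le_mul_of_nonneg_left step3 (by positivity)
    _ = 2 * κS3.toReal * (dist y y' / R) ^ ε * sz μ x y b ε := by ring
    _ ≤ (2 * κS3.toReal + 1) * (dist y y' / R) ^ ε * sz μ x y b ε := by
        apply mul_le_mul_of_nonneg_right _ (sz_nonneg hb0.le)
        apply mul_le_mul_of_nonneg_right _ (by positivity)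
        linarith

end Aux11


/-- Test-norm bound for the composition of two AOTI-type kernels at scales `2^{-k}` and
`2^{-ℓ}` with `k ≥ ℓ` (used for `I₂` in the proof of Theorem 3.3): the kernel
`U(x,y) = ∫ S(x,z) T(z,y) dμ(z)` satisfies `‖U(x,·)‖_{G(x, 2^{-ℓ}, ε, ε)} ≤ C` uniformly. -/
theorem composition_kernel_test_norm
    {X : Type*} [MetricSpace X] [MeasurableSpace X] [BorelSpace X]
    (μ : Measure X) (C₁ n : ℝ) (hC₁ : 1 ≤ C₁) (hn : 0 < n)
    (hballs : BallsFinitePos μ) (hdoub : Doubling μ C₁ n)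
    (ε₁ ε₂ A : ℝ) (hε₁ : 0 < ε₁ ∧ ε₁ ≤ 1) (hε₂ : 0 < ε₂) (hA : 0 < A)
    (ε : ℝ) (hε : 0 < ε ∧ ε < min ε₁ ε₂) :
    ∃ C : ℝ, 0 < C ∧ ∀ k l : ℤ, l ≤ k → ∀ S T : X → X → ℂ,
      Measurable (Function.uncurry S) → Measurable (Function.uncurry T) →
      (∀ x y : X, ‖S x y‖ ≤ A * sz μ x y (sc k) ε₂) →
      (∀ x x' y : X, dist x x' ≤ (sc k + dist x y) / 2 →
        ‖S x y - S x' y‖ ≤ A * (dist x x' / (sc k + dist x y)) ^ ε₁ * sz μ x y (sc k) ε₂) →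
      (∀ x y y' : X, dist y y' ≤ (sc k + dist x y) / 2 →
        ‖S x y - S x y'‖ ≤ A * (dist y y' / (sc k + dist x y)) ^ ε₁ * sz μ x y (sc k) ε₂) →
      (∀ x : X, (∫ z, S x z ∂μ) = 1) → (∀ y : X, (∫ z, S z y ∂μ) = 1) →
      (∀ x y : X, ‖T x y‖ ≤ A * sz μ x y (sc l) ε₂) →
      (∀ x x' y : X, dist x x' ≤ (sc l + dist x y) / 2 →
        ‖T x y - T x' y‖ ≤ A * (dist x x' / (sc l + dist x y)) ^ ε₁ * sz μ x y (sc l) ε₂) →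
      (∀ x y y' : X, dist y y' ≤ (sc l + dist x y) / 2 →
        ‖T x y - T x y'‖ ≤ A * (dist y y' / (sc l + dist x y)) ^ ε₁ * sz μ x y (sc l) ε₂) →
      (∀ x : X, (∫ z, T x z ∂μ) = 1) → (∀ y : X, (∫ z, T z y ∂μ) = 1) →
      ∀ x : X, TestBound μ x (sc l) ε ε (fun y => ∫ z, S x z * T z y ∂μ) C := by
  obtain ⟨hε0, hεm⟩ := hε
  have he1 : ε ≤ ε₁ := (lt_of_lt_of_le hεm (min_le_left _ _)).le
  have he2 : ε < ε₂ := lt_of_lt_of_le hεm (min_le_right _ _)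
  obtain ⟨Cs, hCs0, hCs⟩ := size_master hballs hdoub hC₁ hn hA hε0 he2
  obtain ⟨Ch, hCh0, hCh⟩ := holder_master hballs hdoub hC₁ hn hA hε0 he1 he2
  refine ⟨max Cs Ch, lt_of_lt_of_le hCs0 (le_max_left _ _), ?_⟩
  intro k l hkl S T hmS hmT hS1 hS2 hS3 hS4 hS5 hT1 hT2 hT3 hT4 hT5 x
  have ha : 0 < sc k := by unfold sc; positivity
  have hb0 : 0 < sc l := by unfold sc; positivity
  have hab : sc k ≤ sc l := by
    unfold sc
    exact zpow_le_zpow_right₀ one_le_two (by omega)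
  constructor
  · intro y
    calc ‖∫ z, S x z * T z y ∂μ‖ ≤ Cs * sz μ x y (sc l) ε :=
          hCs (sc k) (sc l) x y S T ha hab hS1 hT1
      _ ≤ max Cs Ch * sz μ x y (sc l) ε :=
          mul_le_mul_of_nonneg_right (le_max_left _ _) (sz_nonneg hb0.le)
  · intro y y' hyy
    calc ‖(∫ z, S x z * T z y ∂μ) - ∫ z, S x z * T z y' ∂μ‖
        ≤ Ch * (dist y y' / (sc l + dist x y)) ^ ε * sz μ x y (sc l) ε :=
          hCh (sc k) (sc l) x y y' S T ha hab hmS hmT hS1 hS3 hT1 hT3 hT5 hyy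
      _ ≤ max Cs Ch * (dist y y' / (sc l + dist x y)) ^ ε * sz μ x y (sc l) ε := by
          apply mul_le_mul_of_nonneg_right _ (sz_nonneg hb0.le)
          apply mul_le_mul_of_nonneg_right (le_max_right _ _)
          have hR0 : 0 < sc l + dist x y := by
            linarith [dist_nonneg (x := x) (y := y)]
          positivity


end RDHardy
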